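/- arXiv:2108.04538 — 3 statements merged into one kernel-verified Lean document; each statement's English description precedes it below -/
import Mathlib

section
/- For every g ∈ SU(d,1) one has X(g) ≠ 0, and for every τ ∈ ℋ the complex number j(g,τ)/X(g) has strictly positive real part (in particular j(g,τ) ≠ 0). -/
open Matrix Complex
open scoped ComplexOrder

noncomputable section

/-- `SLC n` is the special linear group of `n × n` complex matrices. -/
abbrev SLC (n : ℕ) := Matrix.SpecialLinearGroup (Fin n) ℂ

/-- The standard Hermitian matrix of signature `(d,1)` used to define `SU(d,1)`:
`J_{1,d+1} = J_{d+1,1} = 1`, `J_{i,i} = 1` for `2 ≤ i ≤ d` (1-indexed), and `0` otherwise. -/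
def Jmat (d : ℕ) : Matrix (Fin (d+1)) (Fin (d+1)) ℂ :=
  Matrix.of fun i j =>
    if (i = 0 ∧ j = Fin.last d) ∨ (i = Fin.last d ∧ j = 0) then 1
    else if i = j ∧ i ≠ 0 ∧ i ≠ Fin.last d then 1 else 0

/-- `SU(d,1)`, realised as the subgroup of `SL_{d+1}(ℂ)` preserving the Hermitian
form given by `Jmat d`. -/
def SUd1 (d : ℕ) : Subgroup (SLC (d+1)) where
  carrier := {g | (↑g : Matrix (Fin (d+1)) (Fin (d+1)) ℂ)ᴴ * Jmat d * ↑g = Jmat d}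
  one_mem' := by simp
  mul_mem' := by
    intro a b ha hb
    simp only [Set.mem_setOf_eq] at ha hb ⊢
    rw [Matrix.SpecialLinearGroup.coe_mul, Matrix.conjTranspose_mul]
    calc (↑b)ᴴ * (↑a)ᴴ * Jmat d * ((↑a : Matrix (Fin (d+1)) (Fin (d+1)) ℂ) * ↑b)
        = (↑b)ᴴ * ((↑a : Matrix (Fin (d+1)) (Fin (d+1)) ℂ)ᴴ * Jmat d * ↑a) * ↑b := by
          simp only [Matrix.mul_assoc]
      _ = Jmat d := by rw [ha]; exact hb
  inv_mem' := by
    intro a ha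
    simp only [Set.mem_setOf_eq] at ha ⊢
    set A : Matrix (Fin (d+1)) (Fin (d+1)) ℂ := ↑a with hA
    set B : Matrix (Fin (d+1)) (Fin (d+1)) ℂ := ↑(a⁻¹) with hB
    have h1 : A * B = 1 := by
      rw [hA, hB, ← Matrix.SpecialLinearGroup.coe_mul, mul_inv_cancel]
      simp
    calc Bᴴ * Jmat d * B
        = Bᴴ * (Aᴴ * Jmat d * A) * B := by rw [ha]
      _ = (A * B)ᴴ * Jmat d * (A * B) := by
          rw [Matrix.conjTranspose_mul]; simp only [Matrix.mul_assoc]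
      _ = Jmat d := by rw [h1]; simp

/-- The Hermitian form `⟨v,w⟩ = conj(v)ᵀ J w` on `ℂ^{d+1}`. -/
def Hform (d : ℕ) (v w : Fin (d+1) → ℂ) : ℂ := star v ⬝ᵥ (Jmat d *ᵥ w)

/-- The symmetric space `ℋ = {τ ∈ ℂ^d : ⟨(τ;1),(τ;1)⟩ < 0}`. -/
def Hdom (d : ℕ) : Set (Fin d → ℂ) :=
  {τ | Hform d (Fin.snoc τ 1) (Fin.snoc τ 1) < 0}

/-- The automorphy factor `j(g,τ) = Cτ + D`. -/
def jfun (d : ℕ) (g : Matrix (Fin (d+1)) (Fin (d+1)) ℂ) (τ : Fin d → ℂ) : ℂ :=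
  (g *ᵥ Fin.snoc τ 1) (Fin.last d)

/-- The action `g*τ = (Cτ+D)⁻¹ (Aτ+B)` of `SU(d,1)` on `ℋ`. -/
def actH (d : ℕ) (g : Matrix (Fin (d+1)) (Fin (d+1)) ℂ) (τ : Fin d → ℂ) : Fin d → ℂ :=
  fun k => (g *ᵥ Fin.snoc τ 1) (Fin.castSucc k) / jfun d g τ

open scoped Classical in
/-- `X(g) = -g_{d+1,1}` if `g_{d+1,1} ≠ 0`, and `g_{d+1,d+1}` otherwise. -/
def Xfun (d : ℕ) (g : Matrix (Fin (d+1)) (Fin (d+1)) ℂ) : ℂ :=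
  if g (Fin.last d) 0 = 0 then g (Fin.last d) (Fin.last d) else -(g (Fin.last d) 0)

/-- The branch `j̃(g,τ) = Log(j(g,τ)/X(g)) + Log(X(g))` of the logarithm of `j(g,τ)`,
where `Log` is the principal branch (imaginary part in `(-π, π]`). -/
def jtilde (d : ℕ) (g : Matrix (Fin (d+1)) (Fin (d+1)) ℂ) (τ : Fin d → ℂ) : ℂ :=
  Complex.log (jfun d g τ / Xfun d g) + Complex.log (Xfun d g)

/-- A base point of `ℋ` (for `d ≥ 1`). -/
def baseTau (d : ℕ) : Fin d → ℂ := fun i => if (i : ℕ) = 0 then -1 else 0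

/-- The 2-cocycle `σ(g,h) = (1/(2πi))(j̃(gh,τ) − j̃(g,h*τ) − j̃(h,τ))`, evaluated at the
base point of `ℋ` (as proved in the paper, the value is an integer and does not depend
on the choice of `τ ∈ ℋ`). -/
def sigmaC (d : ℕ) (g h : Matrix (Fin (d+1)) (Fin (d+1)) ℂ) : ℂ :=
  (jtilde d (g * h) (baseTau d) - jtilde d g (actH d h (baseTau d)) - jtilde d h (baseTau d)) /
    (2 * Real.pi * Complex.I)

/-- The integer-valued 2-cocycle `σ` on `SU(d,1)` classifying its universal cover. -/
def sigmaZ (d : ℕ) (g h : Matrix (Fin (d+1)) (Fin (d+1)) ℂ) : ℤ := round (sigmaC d g h).re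

section MainAux

open Finset

namespace St4aux

variable {d : ℕ}

def sig (d : ℕ) (i : Fin (d+1)) : Fin (d+1) :=
  if i = 0 then Fin.last d else if i = Fin.last d then 0 else i

lemma zero_ne_last (hd : 1 ≤ d) : (0 : Fin (d+1)) ≠ Fin.last d := by
  intro h
  have := congrArg Fin.val h
  simp [Fin.last] at this
  omega

lemma sig_mid (i : Fin (d+1)) (h0 : i ≠ 0) (hl : i ≠ Fin.last d) : sig d i = i := by
  simp [sig, h0, hl]

lemma sig_zero : sig d 0 = Fin.last d := by simp [sig]

lemma sig_last (hd : 1 ≤ d) : sig d (Fin.last d) = 0 := by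
  simp [sig, (zero_ne_last hd).symm]

lemma Jmat_apply (hd : 1 ≤ d) (i j : Fin (d+1)) :
    Jmat d i j = if j = sig d i then 1 else 0 := by
  have h0l := zero_ne_last hd
  by_cases h0 : i = 0
  · subst h0
    rw [sig_zero]
    by_cases hjl : j = Fin.last d <;> simp [Jmat, hjl, h0l, h0l.symm]
  · by_cases hl : i = Fin.last d
    · subst hl
      rw [sig_last hd]
      by_cases hj0 : j = 0 <;> simp [Jmat, hj0, h0l, h0l.symm, h0]
    · rw [sig_mid i h0 hl]
      by_cases hij : i = j
      · subst hij; simp [Jmat, h0, hl]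
      · simp [Jmat, h0, hl, hij, Ne.symm hij]

lemma Jmat_mulVec (hd : 1 ≤ d) (w : Fin (d+1) → ℂ) (i : Fin (d+1)) :
    (Jmat d *ᵥ w) i = w (sig d i) := by
  simp only [Matrix.mulVec, dotProduct, Jmat_apply hd, ite_mul, one_mul, zero_mul]
  rw [Finset.sum_ite_eq' Finset.univ (sig d i) w]
  simp

lemma sig_sig (hd : 1 ≤ d) (i : Fin (d+1)) : sig d (sig d i) = i := by
  by_cases h0 : i = 0
  · subst h0; rw [sig_zero, sig_last hd]
  · by_cases hl : i = Fin.last d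
    · subst hl; rw [sig_last hd, sig_zero]
    · rw [sig_mid i h0 hl, sig_mid i h0 hl]

lemma JJ (hd : 1 ≤ d) : Jmat d * Jmat d = 1 := by
  ext i j
  rw [Matrix.mul_apply]
  simp only [Jmat_apply hd, ite_mul, one_mul, zero_mul]
  rw [Finset.sum_ite_eq' Finset.univ (sig d i) (fun k => if j = sig d k then 1 else 0)]
  simp [sig_sig hd, Matrix.one_apply, eq_comm]

lemma sum_split (hd : 1 ≤ d) {M : Type*} [AddCommMonoid M] (f : Fin (d+1) → M) :
    ∑ i, f i = (∑ i ∈ Finset.univ \ {0, Fin.last d}, f i) + (f 0 + f (Fin.last d)) := by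
  rw [← Finset.sum_pair (zero_ne_last hd)]
  rw [Finset.sum_sdiff (Finset.subset_univ _)]

end St4aux

end MainAux

/-- For every `g ∈ SU(d,1)` one has `X(g) ≠ 0`, and for every `τ ∈ ℋ`
the complex number `j(g,τ)/X(g)` has strictly positive real part; in particular
`j(g,τ) ≠ 0`. -/
theorem statement4 (d : ℕ) (hd : 2 ≤ d) (g : SLC (d+1)) (hg : g ∈ SUd1 d) :
    Xfun d (↑g) ≠ 0 ∧
    ∀ τ ∈ Hdom d,
      0 < (jfun d (↑g) τ / Xfun d (↑g)).re ∧ jfun d (↑g) τ ≠ 0 := by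
  classical
  have hd1 : 1 ≤ d := by omega
  open St4aux in
  set M : Matrix (Fin (d+1)) (Fin (d+1)) ℂ := (↑g : Matrix (Fin (d+1)) (Fin (d+1)) ℂ) with hM
  set r : Fin (d+1) → ℂ := fun k => M (Fin.last d) k with hr
  set T : Finset (Fin (d+1)) := Finset.univ \ {0, Fin.last d} with hT
  have hmemT : ∀ i ∈ T, i ≠ 0 ∧ i ≠ Fin.last d := by
    intro i hi
    simp only [hT, Finset.mem_sdiff, Finset.mem_insert, Finset.mem_singleton] at hi
    exact ⟨fun h => hi.2 (Or.inl h), fun h => hi.2 (Or.inr h)⟩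
  -- the SU(d,1) relation transposed: M * J * Mᴴ = J
  have hg' : Mᴴ * Jmat d * M = Jmat d := hg
  have hJJ := St4aux.JJ (d := d) hd1
  have hL : (Jmat d * Mᴴ * Jmat d) * M = 1 := by
    calc (Jmat d * Mᴴ * Jmat d) * M = Jmat d * (Mᴴ * Jmat d * M) := by
          simp only [Matrix.mul_assoc]
      _ = 1 := by rw [hg', hJJ]
  have hR : M * (Jmat d * Mᴴ * Jmat d) = 1 := mul_eq_one_comm.mp hL
  have hMJMH : M * Jmat d * Mᴴ = Jmat d := by
    calc M * Jmat d * Mᴴ = M * (Jmat d * Mᴴ * Jmat d) * Jmat d := by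
          simp only [Matrix.mul_assoc, hJJ, Matrix.mul_one]
      _ = Jmat d := by rw [hR, Matrix.one_mul]
  -- the row relation at (last, last)
  have hrel : ∑ k, r k * (starRingEnd ℂ) (r (St4aux.sig d k)) = 0 := by
    have h1 : (M * (Jmat d * Mᴴ)) (Fin.last d) (Fin.last d) = Jmat d (Fin.last d) (Fin.last d) := by
      rw [← Matrix.mul_assoc, hMJMH]
    rw [Matrix.mul_apply] at h1
    have h2 : ∀ k, (Jmat d * Mᴴ) k (Fin.last d) = (starRingEnd ℂ) (r (St4aux.sig d k)) := by
      intro k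
      rw [Matrix.mul_apply]
      have := St4aux.Jmat_mulVec hd1 (fun j => (starRingEnd ℂ) (r j)) k
      simpa [Matrix.mulVec, dotProduct, Matrix.conjTranspose_apply, hr] using this
    have h3 : Jmat d (Fin.last d) (Fin.last d) = 0 := by
      rw [St4aux.Jmat_apply hd1, St4aux.sig_last hd1, if_neg (St4aux.zero_ne_last hd1).symm]
    rw [h3] at h1
    rw [← h1]
    exact Finset.sum_congr rfl fun k _ => by rw [h2 k]
  -- real form of the row relation
  have hrelre : (∑ i ∈ T, Complex.normSq (r i)) + 2 * (r 0 * (starRingEnd ℂ) (r (Fin.last d))).re = 0 := by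
    have := congrArg Complex.re hrel
    rw [St4aux.sum_split hd1] at this
    rw [St4aux.sig_zero, St4aux.sig_last hd1] at this
    simp only [Complex.add_re, Complex.re_sum, Complex.zero_re] at this
    have hmid : ∑ i ∈ T, (r i * (starRingEnd ℂ) (r (St4aux.sig d i))).re
        = ∑ i ∈ T, Complex.normSq (r i) := by
      refine Finset.sum_congr rfl fun i hi => ?_
      obtain ⟨h0, hl⟩ := hmemT i hi
      rw [St4aux.sig_mid i h0 hl, Complex.mul_conj]
      simp
    rw [hmid] at this
    have hswap : (r (Fin.last d) * (starRingEnd ℂ) (r 0)).re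
        = (r 0 * (starRingEnd ℂ) (r (Fin.last d))).re := by
      simp only [Complex.mul_re, Complex.conj_re, Complex.conj_im]
      ring
    rw [hswap] at this
    linarith [this]
  constructor
  · -- X(g) ≠ 0
    by_cases hc : r 0 = 0
    · have hQ : ∑ i ∈ T, Complex.normSq (r i) = 0 := by
        rw [hc] at hrelre; simpa using hrelre
      have hD : r (Fin.last d) ≠ 0 := by
        intro hDz
        have hrow : ∀ k, M (Fin.last d) k = 0 := by
          intro k
          by_cases hk0 : k = 0
          · rw [hk0]; exact hc
          · by_cases hkl : k = Fin.last d
            · rw [hkl]; exact hDz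
            · have hkT : k ∈ T := by
                simp [hT, hk0, hkl]
              have := (Finset.sum_eq_zero_iff_of_nonneg
                (fun i _ => Complex.normSq_nonneg (r i))).mp hQ k hkT
              exact Complex.normSq_eq_zero.mp this
        have hdet0 : M.det = 0 := Matrix.det_eq_zero_of_row_eq_zero (Fin.last d) hrow
        have hdet1 : M.det = 1 := g.prop
        rw [hdet1] at hdet0
        exact one_ne_zero hdet0
      simp only [Xfun]
      rw [if_pos hc]
      exact hD
    · simp only [Xfun]
      rw [if_neg hc]
      exact neg_ne_zero.mpr hc
  · intro τ hτ
    set v : Fin (d+1) → ℂ := Fin.snoc τ 1 with hv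
    have hvlast : v (Fin.last d) = 1 := by simp [hv]
    -- the domain condition, real form
    have hτre : (∑ i ∈ T, Complex.normSq (v i)) + 2 * (v 0).re < 0 := by
      have hH : Hform d v v < 0 := hτ
      have hHe : Hform d v v = (∑ i ∈ T, (starRingEnd ℂ) (v i) * v i)
          + ((starRingEnd ℂ) (v 0) * v (Fin.last d) + (starRingEnd ℂ) (v (Fin.last d)) * v 0) := by
        unfold Hform
        simp only [dotProduct, Pi.star_apply, RCLike.star_def]
        rw [St4aux.sum_split hd1 (f := fun i => (starRingEnd ℂ) (v i) * (Jmat d *ᵥ v) i)]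
        congr 1
        · refine Finset.sum_congr rfl fun i hi => ?_
          obtain ⟨h0, hl⟩ := hmemT i hi
          rw [St4aux.Jmat_mulVec hd1, St4aux.sig_mid i h0 hl]
        · rw [St4aux.Jmat_mulVec hd1, St4aux.Jmat_mulVec hd1,
            St4aux.sig_zero, St4aux.sig_last hd1]
      have hre : (Hform d v v).re < 0 := by
        rw [Complex.lt_def] at hH
        simpa using hH.1
      rw [hHe] at hre
      simp only [Complex.add_re, Complex.re_sum, hvlast, mul_one] at hre
      have hmid : ∑ i ∈ T, ((starRingEnd ℂ) (v i) * v i).re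
          = ∑ i ∈ T, Complex.normSq (v i) := by
        refine Finset.sum_congr rfl fun i _ => ?_
        rw [mul_comm, Complex.mul_conj]
        simp
      rw [hmid] at hre
      have h1 : ((starRingEnd ℂ) (v 0)).re = (v 0).re := Complex.conj_re _
      have h2 : ((starRingEnd ℂ) 1 * v 0).re = (v 0).re := by simp
      rw [h2] at hre
      linarith [hre]
    -- decomposition of j
    have hj : jfun d M τ = (∑ i ∈ T, r i * v i) + (r 0 * v 0 + r (Fin.last d)) := by
      unfold jfun
      rw [← hv]
      simp only [Matrix.mulVec, dotProduct]
      rw [St4aux.sum_split hd1 (f := fun k => M (Fin.last d) k * v k)]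
      rw [hvlast, mul_one]
    by_cases hc : r 0 = 0
    · -- degenerate case: last row is (0,...,0,D)
      have hQ : ∑ i ∈ T, Complex.normSq (r i) = 0 := by
        rw [hc] at hrelre; simpa using hrelre
      have hmidz : ∀ i ∈ T, r i = 0 := by
        intro i hi
        exact Complex.normSq_eq_zero.mp
          ((Finset.sum_eq_zero_iff_of_nonneg (fun i _ => Complex.normSq_nonneg (r i))).mp hQ i hi)
      have hD : r (Fin.last d) ≠ 0 := by
        intro hDz
        have hrow : ∀ k, M (Fin.last d) k = 0 := by
          intro k
          by_cases hk0 : k = 0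
          · rw [hk0]; exact hc
          · by_cases hkl : k = Fin.last d
            · rw [hkl]; exact hDz
            · exact hmidz k (by simp [hT, hk0, hkl])
        have hdet0 : M.det = 0 := Matrix.det_eq_zero_of_row_eq_zero (Fin.last d) hrow
        have hdet1 : M.det = 1 := g.prop
        rw [hdet1] at hdet0
        exact one_ne_zero hdet0
      have hjD : jfun d M τ = r (Fin.last d) := by
        rw [hj, hc, Finset.sum_eq_zero (fun i hi => by rw [hmidz i hi, zero_mul])]
        ring
      have hX : Xfun d M = r (Fin.last d) := by
        simp only [Xfun]
        rw [if_pos hc]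
      constructor
      · rw [hjD, hX, div_self hD]
        norm_num
      · rw [hjD]; exact hD
    · -- main case: r 0 ≠ 0
      have hX : Xfun d M = -(r 0) := by
        simp only [Xfun]
        rw [if_neg hc]
      -- key inequality
      have key : ((starRingEnd ℂ) (r 0) * jfun d M τ).re < 0 := by
        have hexp : (starRingEnd ℂ) (r 0) * jfun d M τ
            = (∑ i ∈ T, (starRingEnd ℂ) (r 0) * (r i * v i))
              + ((Complex.normSq (r 0) : ℂ) * v 0 + (starRingEnd ℂ) (r 0) * r (Fin.last d)) := by
          rw [hj, ← Finset.mul_sum]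
          have : ((Complex.normSq (r 0) : ℂ)) = (starRingEnd ℂ) (r 0) * r 0 := by
            rw [mul_comm, Complex.mul_conj]
          rw [this]
          ring
        have hre : ((starRingEnd ℂ) (r 0) * jfun d M τ).re
            = (∑ i ∈ T, ((starRingEnd ℂ) (r 0) * (r i * v i)).re)
              + (Complex.normSq (r 0) * (v 0).re + ((starRingEnd ℂ) (r 0) * r (Fin.last d)).re) := by
          rw [hexp]
          simp only [Complex.add_re, Complex.re_sum]
          congr 2
          exact Complex.re_ofReal_mul _ _
        set a : ℝ := ‖r 0‖ with ha
        have hapos : 0 < a := by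
          rw [ha]; exact norm_pos_iff.mpr hc
        set P : ℝ := ∑ i ∈ T, Complex.normSq (v i) with hP
        set Q : ℝ := ∑ i ∈ T, Complex.normSq (r i) with hQ
        set R : ℝ := ∑ i ∈ T, ‖r i‖ * ‖v i‖ with hRR
        have hbound : (∑ i ∈ T, ((starRingEnd ℂ) (r 0) * (r i * v i)).re) ≤ a * R := by
          rw [hRR, Finset.mul_sum]
          refine Finset.sum_le_sum fun i _ => ?_
          calc ((starRingEnd ℂ) (r 0) * (r i * v i)).re
              ≤ ‖(starRingEnd ℂ) (r 0) * (r i * v i)‖ := Complex.re_le_norm _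
            _ = a * (‖r i‖ * ‖v i‖) := by
                rw [norm_mul, norm_mul, Complex.norm_conj]
        have hswap2 : ((starRingEnd ℂ) (r 0) * r (Fin.last d)).re
            = (r 0 * (starRingEnd ℂ) (r (Fin.last d))).re := by
          simp only [Complex.mul_re, Complex.conj_re, Complex.conj_im]
          ring
        have hSOS : 0 ≤ a^2 * P - 2 * a * R + Q := by
          have hterm : ∀ i ∈ T, (a * ‖v i‖ - ‖r i‖)^2
              = a^2 * Complex.normSq (v i)
                - 2 * a * (‖r i‖ * ‖v i‖) + Complex.normSq (r i) := by
            intro i _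
            rw [← Complex.sq_norm (v i), ← Complex.sq_norm (r i)]
            ring
          have h0 : (0:ℝ) ≤ ∑ i ∈ T, (a * ‖v i‖ - ‖r i‖)^2 :=
            Finset.sum_nonneg fun i _ => sq_nonneg _
          rw [Finset.sum_congr rfl hterm] at h0
          rw [Finset.sum_add_distrib, Finset.sum_sub_distrib, ← Finset.mul_sum,
            ← Finset.mul_sum] at h0
          rw [hP, hQ, hRR]
          linarith [h0]
        have hna : Complex.normSq (r 0) = a^2 := by
          rw [ha, Complex.sq_norm]
        have h5 : a^2 * (P + 2 * (v 0).re) < 0 :=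
          mul_neg_of_pos_of_neg (pow_pos hapos 2) (by rw [hP]; linarith [hτre])
        rw [hre, hswap2, hna]
        nlinarith [h5, hSOS, hbound, hrelre, hQ, hP]
      have hnsq : (0:ℝ) < Complex.normSq (r 0) := Complex.normSq_pos.mpr hc
      have hdivre : (jfun d M τ / Xfun d M).re = -((starRingEnd ℂ) (r 0) * jfun d M τ).re / Complex.normSq (r 0) := by
        rw [hX]
        have h7 : jfun d M τ / (-(r 0)) = ((starRingEnd ℂ) (r 0) * jfun d M τ) / (-((Complex.normSq (r 0) : ℝ) : ℂ)) := by
          rw [div_eq_div_iff (neg_ne_zero.mpr hc)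
            (by simpa using Complex.normSq_eq_zero.not.mpr hc)]
          have : ((Complex.normSq (r 0) : ℝ) : ℂ) = r 0 * (starRingEnd ℂ) (r 0) :=
            (Complex.mul_conj _).symm
          rw [this]
          ring
        rw [h7]
        rw [show (-((Complex.normSq (r 0) : ℝ) : ℂ)) = ((-(Complex.normSq (r 0)) : ℝ) : ℂ) by push_cast; ring]
        rw [Complex.div_ofReal_re, div_neg, neg_div]
      constructor
      · rw [hdivre]
        exact div_pos (neg_pos.mpr key) hnsq
      · intro hjz
        rw [hjz, mul_zero] at key
        simp at key

end
end

section
/- For all g, h ∈ SU(d,1), the quantity (1/(2πi))(j̃(gh,τ) − j̃(g,h*τ) − j̃(h,τ)) is an integer and is independent of the choice of τ ∈ ℋ; moreover the resulting function σ : SU(d,1) × SU(d,1) → ℤ satisfies the inhomogeneous 2-cocycle identity σ(g,h) + σ(gh,k) = σ(g,hk) + σ(h,k) for all g,h,k ∈ SU(d,1). -/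
open Matrix Complex
open scoped ComplexOrder

noncomputable section

section Lemmas
variable {d : ℕ}

lemma last_ne_zero (hd : 1 ≤ d) : (Fin.last d) ≠ 0 := by
  simp [Fin.ext_iff]; omega

lemma castSucc_ne_last (k : Fin d) : (Fin.castSucc k) ≠ Fin.last d := by
  simp [Fin.ext_iff]; omega

lemma Jmat_mulVec (hd : 1 ≤ d) (w : Fin (d+1) → ℂ) (i : Fin (d+1)) :
    (Jmat d *ᵥ w) i = if i = 0 then w (Fin.last d) else if i = Fin.last d then w 0 else w i := by
  rw [Matrix.mulVec, dotProduct]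
  by_cases h0 : i = 0
  · subst h0
    simp only [if_pos rfl]
    rw [Finset.sum_eq_single (Fin.last d)]
    · simp [Jmat, last_ne_zero hd]
    · intro b _ hb
      simp [Jmat, hb, (last_ne_zero hd).symm, Ne.symm hb]
    · simp
  · by_cases hl : i = Fin.last d
    · subst hl
      simp only [if_neg h0, if_pos rfl]
      rw [Finset.sum_eq_single 0]
      · simp [Jmat, last_ne_zero hd]
      · intro b _ hb
        simp [Jmat, hb, last_ne_zero hd, h0]
      · simp
    · simp only [if_neg h0, if_neg hl]
      rw [Finset.sum_eq_single i]
      · simp [Jmat, h0, hl]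
      · intro b _ hb
        simp [Jmat, h0, hl, Ne.symm hb]
      · simp

lemma sum_fin_split [NeZero d] (f : Fin (d+1) → ℂ) :
    ∑ i, f i = f 0 + f (Fin.last d) + ∑ k ∈ Finset.univ.erase (0 : Fin d), f k.castSucc := by
  rw [Fin.sum_univ_castSucc]
  rw [← Finset.add_sum_erase _ _ (Finset.mem_univ (0 : Fin d))]
  have : (Fin.castSucc (0 : Fin d)) = 0 := by simp [Fin.ext_iff]
  rw [this]; ring

lemma castSucc_eq_zero_iff' [NeZero d] (k : Fin d) : (Fin.castSucc k) = 0 ↔ k = 0 := by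
  rw [Fin.ext_iff, Fin.ext_iff]; simp

lemma dot_J (hd : 1 ≤ d) [NeZero d] (u w : Fin (d+1) → ℂ) :
    u ⬝ᵥ (Jmat d *ᵥ w) = u 0 * w (Fin.last d) + u (Fin.last d) * w 0
      + ∑ k ∈ Finset.univ.erase (0 : Fin d), u k.castSucc * w k.castSucc := by
  rw [dotProduct]
  rw [sum_fin_split (fun i => u i * (Jmat d *ᵥ w) i)]
  congr 1
  · congr 1
    · rw [Jmat_mulVec hd]; simp
    · rw [Jmat_mulVec hd]; simp [last_ne_zero hd]
  · apply Finset.sum_congr rfl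
    intro k hk
    rw [Jmat_mulVec hd]
    have hk0 : k ≠ 0 := Finset.ne_of_mem_erase hk
    rw [if_neg (by rw [castSucc_eq_zero_iff']; exact hk0), if_neg (castSucc_ne_last k)]

lemma Hform_eq (hd : 1 ≤ d) [NeZero d] (v w : Fin (d+1) → ℂ) :
    Hform d v w = (starRingEnd ℂ) (v 0) * w (Fin.last d) + (starRingEnd ℂ) (v (Fin.last d)) * w 0
      + ∑ k ∈ Finset.univ.erase (0 : Fin d),
          (starRingEnd ℂ) (v k.castSucc) * w k.castSucc := by
  rw [Hform, dot_J hd]; rfl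

lemma Hform_snoc (hd : 1 ≤ d) [NeZero d] (τ : Fin d → ℂ) :
    Hform d (Fin.snoc τ 1) (Fin.snoc τ 1)
      = ((2 * (τ 0).re + ∑ k ∈ Finset.univ.erase (0 : Fin d), Complex.normSq (τ k) : ℝ) : ℂ) := by
  rw [Hform_eq hd]
  have h0 : (Fin.snoc τ (1:ℂ) : Fin (d+1) → ℂ) 0 = τ 0 := by
    have : ((0 : Fin (d+1))) = Fin.castSucc 0 := by simp [Fin.ext_iff]
    rw [this, Fin.snoc_castSucc]
  have hl : (Fin.snoc τ (1:ℂ) : Fin (d+1) → ℂ) (Fin.last d) = 1 := Fin.snoc_last _ _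
  rw [h0, hl]
  simp only [Fin.snoc_castSucc]
  have hc : ∀ z : ℂ, (starRingEnd ℂ) z * z = (Complex.normSq z : ℂ) := by
    intro z; rw [Complex.normSq_eq_conj_mul_self]
  rw [Finset.sum_congr rfl (fun k _ => hc (τ k))]
  have hre : ((2 * (τ 0).re : ℝ) : ℂ) = (starRingEnd ℂ) (τ 0) * 1 + (starRingEnd ℂ) 1 * τ 0 := by
    simp [Complex.ext_iff, Complex.conj_re, Complex.conj_im]; ring
  rw [Complex.ofReal_add, hre]
  push_cast
  ring


lemma Jmat_mul_self (hd : 1 ≤ d) : Jmat d * Jmat d = 1 := by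
  ext i j
  have h : (Jmat d * Jmat d) i j = (Jmat d *ᵥ (fun k => Jmat d k j)) i := by
    simp [Matrix.mul_apply, Matrix.mulVec, dotProduct]
  rw [h, Jmat_mulVec hd]
  simp only [Jmat, Matrix.of_apply, Matrix.one_apply]
  split_ifs <;> simp_all [Fin.ext_iff, -Fin.val_eq_zero_iff] <;> omega

lemma gJgH (hd : 1 ≤ d) {g : SLC (d+1)} (hg : g ∈ SUd1 d) :
    (↑g : Matrix (Fin (d+1)) (Fin (d+1)) ℂ) * Jmat d * (↑g)ᴴ = Jmat d := by
  have hg' : (g : Matrix (Fin (d+1)) (Fin (d+1)) ℂ)ᴴ * Jmat d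
      * (g : Matrix (Fin (d+1)) (Fin (d+1)) ℂ) = Jmat d := hg
  set G : Matrix (Fin (d+1)) (Fin (d+1)) ℂ := (g : Matrix (Fin (d+1)) (Fin (d+1)) ℂ) with hGdef
  have h1 : (Jmat d * Gᴴ * Jmat d) * G = 1 := by
    calc (Jmat d * Gᴴ * Jmat d) * G = Jmat d * (Gᴴ * Jmat d * G) := by
          simp only [Matrix.mul_assoc]
      _ = 1 := by rw [hg', Jmat_mul_self hd]
  have h2 : G * (Jmat d * Gᴴ * Jmat d) = 1 := mul_eq_one_comm.mp h1
  simp only [← Matrix.mul_assoc] at h2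
  calc G * Jmat d * Gᴴ
      = (G * Jmat d * Gᴴ * Jmat d) * Jmat d := by
        rw [Matrix.mul_assoc (G * Jmat d * Gᴴ), Jmat_mul_self hd, Matrix.mul_one]
    _ = Jmat d := by rw [h2, Matrix.one_mul]

/-- The relation satisfied by the last row of `g ∈ SU(d,1)`. -/
lemma last_row_rel (hd : 1 ≤ d) [NeZero d] {g : SLC (d+1)} (hg : g ∈ SUd1 d) :
    (↑g : Matrix (Fin (d+1)) (Fin (d+1)) ℂ) (Fin.last d) 0
        * (starRingEnd ℂ) ((↑g : Matrix (Fin (d+1)) (Fin (d+1)) ℂ) (Fin.last d) (Fin.last d))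
      + (↑g : Matrix (Fin (d+1)) (Fin (d+1)) ℂ) (Fin.last d) (Fin.last d)
        * (starRingEnd ℂ) ((↑g : Matrix (Fin (d+1)) (Fin (d+1)) ℂ) (Fin.last d) 0)
      + ∑ k ∈ Finset.univ.erase (0 : Fin d),
          (Complex.normSq ((↑g : Matrix (Fin (d+1)) (Fin (d+1)) ℂ) (Fin.last d) k.castSucc) : ℂ)
      = 0 := by
  set G : Matrix (Fin (d+1)) (Fin (d+1)) ℂ := (↑g : Matrix (Fin (d+1)) (Fin (d+1)) ℂ) with hG
  have h : G * Jmat d * Gᴴ = Jmat d := gJgH hd hg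
  have he : (G * Jmat d * Gᴴ) (Fin.last d) (Fin.last d) = Jmat d (Fin.last d) (Fin.last d) := by
    rw [h]
  have hJ : Jmat d (Fin.last d) (Fin.last d) = 0 := by
    simp [Jmat, last_ne_zero hd]
  have hdot : (G * Jmat d * Gᴴ) (Fin.last d) (Fin.last d)
      = (fun j => G (Fin.last d) j) ⬝ᵥ (Jmat d *ᵥ (fun k => (starRingEnd ℂ) (G (Fin.last d) k))) := by
    rw [Matrix.mul_assoc, Matrix.mul_apply]
    simp [dotProduct, Matrix.mul_apply, Matrix.mulVec, Matrix.conjTranspose_apply,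
      Finset.mul_sum]
  rw [hdot, dot_J hd, hJ] at he
  rw [← he]
  congr 1
  exact Finset.sum_congr rfl (fun k _ => (Complex.mul_conj _).symm)

lemma mem_Hdom_iff (hd : 1 ≤ d) [NeZero d] (τ : Fin d → ℂ) :
    τ ∈ Hdom d ↔
      2 * (τ 0).re + ∑ k ∈ Finset.univ.erase (0:Fin d), Complex.normSq (τ k) < 0 := by
  rw [Hdom, Set.mem_setOf_eq, Hform_snoc hd]
  constructor
  · intro h; exact_mod_cast h
  · intro h; exact_mod_cast h

lemma baseTau_mem_Hdom (hd : 1 ≤ d) [NeZero d] : baseTau d ∈ Hdom d := by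
  rw [mem_Hdom_iff hd]
  have h0 : baseTau d 0 = -1 := by simp [baseTau]
  have hsum : ∑ k ∈ Finset.univ.erase (0:Fin d), Complex.normSq (baseTau d k) = 0 := by
    apply Finset.sum_eq_zero
    intro k hk
    have : (k:ℕ) ≠ 0 := by
      intro hc
      exact Finset.ne_of_mem_erase hk (Fin.ext hc)
    simp [baseTau, this]
  rw [h0, hsum]
  norm_num

lemma normSq_convex_aux {a b : ℝ} (z w : ℂ) (ha : 0 ≤ a) (hb : 0 ≤ b) (hab : a + b = 1) :
    Complex.normSq ((a:ℂ) * z + (b:ℂ) * w) ≤ a * Complex.normSq z + b * Complex.normSq w := by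
  simp only [Complex.normSq_apply, Complex.add_re, Complex.add_im, Complex.mul_re,
    Complex.mul_im, Complex.ofReal_re, Complex.ofReal_im]
  nlinarith [mul_nonneg ha hb, sq_nonneg (z.re - w.re), sq_nonneg (z.im - w.im)]

lemma convex_Hdom (hd : 1 ≤ d) [NeZero d] : Convex ℝ (Hdom d) := by
  intro x hx y hy a b ha hb hab
  rw [mem_Hdom_iff hd] at hx hy ⊢
  have hcomp : ∀ k : Fin d, (a • x + b • y) k = (a:ℂ) * x k + (b:ℂ) * y k := by
    intro k
    simp [Complex.real_smul]
  have hterm : ∀ k ∈ Finset.univ.erase (0:Fin d),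
      Complex.normSq ((a • x + b • y) k)
        ≤ a * Complex.normSq (x k) + b * Complex.normSq (y k) := by
    intro k _
    rw [hcomp k]
    exact normSq_convex_aux _ _ ha hb hab
  have hsum := Finset.sum_le_sum hterm
  rw [Finset.sum_add_distrib, ← Finset.mul_sum, ← Finset.mul_sum] at hsum
  have hre : ((a • x + b • y) 0).re = a * (x 0).re + b * (y 0).re := by
    rw [hcomp 0]
    simp [Complex.add_re, Complex.mul_re]
  rw [hre]
  have hcombo : a * (2 * (x 0).re + ∑ k ∈ Finset.univ.erase (0:Fin d), Complex.normSq (x k))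
      + b * (2 * (y 0).re + ∑ k ∈ Finset.univ.erase (0:Fin d), Complex.normSq (y k)) < 0 := by
    rcases lt_or_eq_of_le ha with h | h
    · nlinarith
    · have hb1 : b = 1 := by linarith
      rw [← h, hb1]; simpa using hy
  nlinarith [hsum, hcombo]

lemma jfun_eq [NeZero d] (g : Matrix (Fin (d+1)) (Fin (d+1)) ℂ) (τ : Fin d → ℂ) :
    jfun d g τ = g (Fin.last d) 0 * τ 0 + g (Fin.last d) (Fin.last d)
      + ∑ k ∈ Finset.univ.erase (0:Fin d), g (Fin.last d) k.castSucc * τ k := by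
  rw [jfun, Matrix.mulVec, dotProduct]
  rw [sum_fin_split]
  have h0 : (Fin.snoc τ (1:ℂ) : Fin (d+1) → ℂ) 0 = τ 0 := by
    have : ((0 : Fin (d+1))) = Fin.castSucc 0 := by simp [Fin.ext_iff]
    rw [this, Fin.snoc_castSucc]
  have hl : (Fin.snoc τ (1:ℂ) : Fin (d+1) → ℂ) (Fin.last d) = 1 := Fin.snoc_last _ _
  rw [h0, hl]
  simp only [Fin.snoc_castSucc, mul_one]

lemma div_re_pos_of_mul_conj {z w : ℂ} (hw : w ≠ 0) (h : 0 < (z * (starRingEnd ℂ) w).re) :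
    0 < (z / w).re := by
  have hn : 0 < Complex.normSq w := Complex.normSq_pos.mpr hw
  have heq : (z / w).re = (z * (starRingEnd ℂ) w).re / Complex.normSq w := by
    rw [Complex.div_re, Complex.mul_re, Complex.conj_re, Complex.conj_im]
    ring
  rw [heq]
  positivity

lemma per_term_bound (a b t : ℂ) :
    (b * (starRingEnd ℂ) a * t).re
      ≤ (Complex.normSq a * Complex.normSq t + Complex.normSq b) / 2 := by
  simp only [Complex.normSq_apply, Complex.mul_re, Complex.mul_im, Complex.conj_re,
    Complex.conj_im]
  nlinarith [sq_nonneg (a.re * t.re + a.im * t.im - b.re), sq_nonneg (a.re * t.im - a.im * t.re + b.im)]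

/-- In case `g_{last,0} = 0`, the middle entries of the last row vanish and the
corner entry is nonzero. -/
lemma row_case_zero (hd : 1 ≤ d) [NeZero d] {g : SLC (d+1)} (hg : g ∈ SUd1 d)
    (h0 : (↑g : Matrix (Fin (d+1)) (Fin (d+1)) ℂ) (Fin.last d) 0 = 0) :
    (∀ k : Fin d, k ≠ 0 → (↑g : Matrix (Fin (d+1)) (Fin (d+1)) ℂ) (Fin.last d) k.castSucc = 0)
      ∧ (↑g : Matrix (Fin (d+1)) (Fin (d+1)) ℂ) (Fin.last d) (Fin.last d) ≠ 0 := by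
  have hrel := last_row_rel hd hg
  rw [h0] at hrel
  simp only [zero_mul, map_zero, mul_zero, zero_add, add_zero] at hrel
  have hsum : ∑ k ∈ Finset.univ.erase (0:Fin d),
      Complex.normSq ((↑g : Matrix (Fin (d+1)) (Fin (d+1)) ℂ) (Fin.last d) k.castSucc) = 0 := by
    have := congrArg Complex.re hrel
    rw [Complex.re_sum] at this
    simpa using this
  have hmid : ∀ k : Fin d, k ≠ 0 →
      (↑g : Matrix (Fin (d+1)) (Fin (d+1)) ℂ) (Fin.last d) k.castSucc = 0 := by
    intro k hk
    have hz := (Finset.sum_eq_zero_iff_of_nonneg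
      (fun i _ => Complex.normSq_nonneg _)).mp hsum k (by simp [hk])
    exact Complex.normSq_eq_zero.mp hz
  refine ⟨hmid, ?_⟩
  intro hll
  have hrow : ∀ j, (↑g : Matrix (Fin (d+1)) (Fin (d+1)) ℂ) (Fin.last d) j = 0 := by
    intro j
    induction j using Fin.lastCases with
    | last => exact hll
    | cast i =>
      by_cases hi : i = 0
      · subst hi
        have hcz : (Fin.castSucc (0:Fin d)) = 0 := by simp [Fin.ext_iff]
        rw [hcz]; exact h0
      · exact hmid i hi
  have hdet : (↑g : Matrix (Fin (d+1)) (Fin (d+1)) ℂ).det = 0 :=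
    Matrix.det_eq_zero_of_row_eq_zero (Fin.last d) hrow
  have hdet1 : (↑g : Matrix (Fin (d+1)) (Fin (d+1)) ℂ).det = 1 := g.prop
  rw [hdet1] at hdet
  exact one_ne_zero hdet

set_option maxHeartbeats 1000000 in
/-- The key positivity: `Re(j(g,τ)/X(g)) > 0` for `g ∈ SU(d,1)` and `τ ∈ ℋ`. -/
lemma key_pos (hd : 1 ≤ d) [NeZero d] {g : SLC (d+1)} (hg : g ∈ SUd1 d)
    {τ : Fin d → ℂ} (hτ : τ ∈ Hdom d) :
    0 < ((jfun d (↑g) τ) / Xfun d (↑g)).re := by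
  classical
  by_cases h0 : (↑g : Matrix (Fin (d+1)) (Fin (d+1)) ℂ) (Fin.last d) 0 = 0
  · obtain ⟨hmid, hll⟩ := row_case_zero hd hg h0
    have hj : jfun d (↑g) τ = (↑g : Matrix (Fin (d+1)) (Fin (d+1)) ℂ) (Fin.last d) (Fin.last d) := by
      rw [jfun_eq, h0, zero_mul, zero_add]
      rw [Finset.sum_eq_zero (fun k hk => by
        rw [hmid k (Finset.ne_of_mem_erase hk), zero_mul]), add_zero]
    have hX : Xfun d (↑g) = (↑g : Matrix (Fin (d+1)) (Fin (d+1)) ℂ) (Fin.last d) (Fin.last d) := by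
      rw [Xfun, if_pos h0]
    rw [hj, hX, div_self hll]
    norm_num
  · have hX : Xfun d (↑g) = -((↑g : Matrix (Fin (d+1)) (Fin (d+1)) ℂ) (Fin.last d) 0) := by
      rw [Xfun, if_neg h0]
    rw [hX]
    apply div_re_pos_of_mul_conj (neg_ne_zero.mpr h0)
    rw [map_neg, mul_neg, Complex.neg_re, neg_pos]
    have hrel := last_row_rel hd hg
    have hrelre : 2 * ((↑g : Matrix (Fin (d+1)) (Fin (d+1)) ℂ) (Fin.last d) (Fin.last d)
          * (starRingEnd ℂ) ((↑g : Matrix (Fin (d+1)) (Fin (d+1)) ℂ) (Fin.last d) 0)).re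
        + ∑ k ∈ Finset.univ.erase (0:Fin d),
            Complex.normSq ((↑g : Matrix (Fin (d+1)) (Fin (d+1)) ℂ) (Fin.last d) k.castSucc) = 0 := by
      have hre := congrArg Complex.re hrel
      simp only [Complex.add_re, Complex.re_sum, Complex.ofReal_re, Complex.zero_re] at hre
      have hsymm : ((↑g : Matrix (Fin (d+1)) (Fin (d+1)) ℂ) (Fin.last d) 0
            * (starRingEnd ℂ) ((↑g : Matrix (Fin (d+1)) (Fin (d+1)) ℂ) (Fin.last d) (Fin.last d))).re
          = ((↑g : Matrix (Fin (d+1)) (Fin (d+1)) ℂ) (Fin.last d) (Fin.last d)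
            * (starRingEnd ℂ) ((↑g : Matrix (Fin (d+1)) (Fin (d+1)) ℂ) (Fin.last d) 0)).re := by
        simp only [Complex.mul_re, Complex.conj_re, Complex.conj_im]
        ring
      rw [hsymm] at hre
      linarith [hre]
    have hτ' := (mem_Hdom_iff hd τ).mp hτ
    have hjre : ((jfun d (↑g) τ)
          * (starRingEnd ℂ) ((↑g : Matrix (Fin (d+1)) (Fin (d+1)) ℂ) (Fin.last d) 0)).re
        = Complex.normSq ((↑g : Matrix (Fin (d+1)) (Fin (d+1)) ℂ) (Fin.last d) 0) * (τ 0).re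
          + ((↑g : Matrix (Fin (d+1)) (Fin (d+1)) ℂ) (Fin.last d) (Fin.last d)
              * (starRingEnd ℂ) ((↑g : Matrix (Fin (d+1)) (Fin (d+1)) ℂ) (Fin.last d) 0)).re
          + ∑ k ∈ Finset.univ.erase (0:Fin d),
              ((↑g : Matrix (Fin (d+1)) (Fin (d+1)) ℂ) (Fin.last d) k.castSucc
                * (starRingEnd ℂ) ((↑g : Matrix (Fin (d+1)) (Fin (d+1)) ℂ) (Fin.last d) 0) * τ k).re := by
      rw [jfun_eq, add_mul, add_mul, Finset.sum_mul, Complex.add_re, Complex.add_re, Complex.re_sum]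
      congr 1
      · congr 1
        have h1 : (↑g : Matrix (Fin (d+1)) (Fin (d+1)) ℂ) (Fin.last d) 0 * τ 0
              * (starRingEnd ℂ) ((↑g : Matrix (Fin (d+1)) (Fin (d+1)) ℂ) (Fin.last d) 0)
            = (Complex.normSq ((↑g : Matrix (Fin (d+1)) (Fin (d+1)) ℂ) (Fin.last d) 0) : ℂ) * τ 0 := by
          calc (↑g : Matrix (Fin (d+1)) (Fin (d+1)) ℂ) (Fin.last d) 0 * τ 0
                * (starRingEnd ℂ) ((↑g : Matrix (Fin (d+1)) (Fin (d+1)) ℂ) (Fin.last d) 0)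
              = (↑g : Matrix (Fin (d+1)) (Fin (d+1)) ℂ) (Fin.last d) 0
                * (starRingEnd ℂ) ((↑g : Matrix (Fin (d+1)) (Fin (d+1)) ℂ) (Fin.last d) 0) * τ 0 := by
                ring
            _ = _ := by rw [Complex.mul_conj]
        rw [h1]
        simp [Complex.mul_re]
      · apply Finset.sum_congr rfl
        intro k _
        congr 1
        ring
    rw [hjre]
    have hbound := Finset.sum_le_sum (fun k (_ : k ∈ Finset.univ.erase (0:Fin d)) =>
      per_term_bound ((↑g : Matrix (Fin (d+1)) (Fin (d+1)) ℂ) (Fin.last d) 0)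
        ((↑g : Matrix (Fin (d+1)) (Fin (d+1)) ℂ) (Fin.last d) k.castSucc) (τ k))
    rw [← Finset.sum_div, Finset.sum_add_distrib, ← Finset.mul_sum] at hbound
    have hN : 0 < Complex.normSq ((↑g : Matrix (Fin (d+1)) (Fin (d+1)) ℂ) (Fin.last d) 0) :=
      Complex.normSq_pos.mpr h0
    nlinarith [hbound, hrelre, mul_neg_of_pos_of_neg hN hτ']

lemma Xfun_ne_zero (hd : 1 ≤ d) [NeZero d] {g : SLC (d+1)} (hg : g ∈ SUd1 d) :
    Xfun d (↑g) ≠ 0 := by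
  intro hc
  have := key_pos hd hg (baseTau_mem_Hdom hd)
  rw [hc, div_zero] at this
  simp at this

lemma jfun_ne_zero (hd : 1 ≤ d) [NeZero d] {g : SLC (d+1)} (hg : g ∈ SUd1 d)
    {τ : Fin d → ℂ} (hτ : τ ∈ Hdom d) : jfun d (↑g) τ ≠ 0 := by
  intro hc
  have := key_pos hd hg hτ
  rw [hc, zero_div] at this
  simp at this

lemma exp_jtilde (hd : 1 ≤ d) [NeZero d] {g : SLC (d+1)} (hg : g ∈ SUd1 d)
    {τ : Fin d → ℂ} (hτ : τ ∈ Hdom d) :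
    Complex.exp (jtilde d (↑g) τ) = jfun d (↑g) τ := by
  have hX := Xfun_ne_zero hd hg
  have hj := jfun_ne_zero hd hg hτ
  rw [jtilde, Complex.exp_add, Complex.exp_log hX, Complex.exp_log (div_ne_zero hj hX)]
  field_simp

lemma Hform_mulVec {g : SLC (d+1)} (hg : g ∈ SUd1 d) (v w : Fin (d+1) → ℂ) :
    Hform d ((↑g : Matrix (Fin (d+1)) (Fin (d+1)) ℂ) *ᵥ v)
      ((↑g : Matrix (Fin (d+1)) (Fin (d+1)) ℂ) *ᵥ w) = Hform d v w := by
  have hg' : (g : Matrix (Fin (d+1)) (Fin (d+1)) ℂ)ᴴ * Jmat d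
      * (g : Matrix (Fin (d+1)) (Fin (d+1)) ℂ) = Jmat d := hg
  rw [Hform, Hform, Matrix.star_mulVec, Matrix.mulVec_mulVec,
    ← dotProduct_mulVec, Matrix.mulVec_mulVec, ← Matrix.mul_assoc, hg']

lemma snoc_actH (hd : 1 ≤ d) [NeZero d] {g : SLC (d+1)} (hg : g ∈ SUd1 d)
    {τ : Fin d → ℂ} (hτ : τ ∈ Hdom d) :
    (↑g : Matrix (Fin (d+1)) (Fin (d+1)) ℂ) *ᵥ Fin.snoc τ 1
      = jfun d (↑g) τ • (Fin.snoc (actH d (↑g) τ) 1 : Fin (d+1) → ℂ) := by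
  have hj := jfun_ne_zero hd hg hτ
  funext i
  induction i using Fin.lastCases with
  | last =>
    rw [Pi.smul_apply, Fin.snoc_last, smul_eq_mul, mul_one]
    rfl
  | cast k =>
    rw [Pi.smul_apply, Fin.snoc_castSucc, smul_eq_mul, actH]
    rw [mul_div_cancel₀ _ hj]

lemma actH_mem_Hdom (hd : 1 ≤ d) [NeZero d] {g : SLC (d+1)} (hg : g ∈ SUd1 d)
    {τ : Fin d → ℂ} (hτ : τ ∈ Hdom d) : actH d (↑g) τ ∈ Hdom d := by
  have hj := jfun_ne_zero hd hg hτ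
  have hv := snoc_actH hd hg hτ
  have h1 : Hform d (Fin.snoc τ 1) (Fin.snoc τ 1)
      = (Complex.normSq (jfun d (↑g) τ) : ℂ)
        * Hform d (Fin.snoc (actH d (↑g) τ) 1) (Fin.snoc (actH d (↑g) τ) 1) := by
    rw [← Hform_mulVec hg, hv, Hform, Hform]
    rw [star_smul, Matrix.mulVec_smul, smul_dotProduct, dotProduct_smul]
    rw [smul_smul, smul_eq_mul]
    congr 1
    rw [Complex.normSq_eq_conj_mul_self]
    rfl
  rw [Hform_snoc hd, Hform_snoc hd] at h1
  have h2 : (2 * (τ 0).re + ∑ k ∈ Finset.univ.erase (0:Fin d), Complex.normSq (τ k))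
      = Complex.normSq (jfun d (↑g) τ)
        * (2 * ((actH d (↑g) τ) 0).re
          + ∑ k ∈ Finset.univ.erase (0:Fin d), Complex.normSq ((actH d (↑g) τ) k)) := by
    exact_mod_cast h1
  have hτ' := (mem_Hdom_iff hd τ).mp hτ
  have hN : 0 < Complex.normSq (jfun d (↑g) τ) := Complex.normSq_pos.mpr hj
  rw [mem_Hdom_iff hd]
  nlinarith [h2, hτ', hN]

lemma jfun_mul (hd : 1 ≤ d) [NeZero d] {g h : SLC (d+1)} (hg : g ∈ SUd1 d) (hh : h ∈ SUd1 d)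
    {τ : Fin d → ℂ} (hτ : τ ∈ Hdom d) :
    jfun d ((↑g : Matrix (Fin (d+1)) (Fin (d+1)) ℂ) * (↑h : Matrix (Fin (d+1)) (Fin (d+1)) ℂ)) τ
      = jfun d (↑g) (actH d (↑h) τ) * jfun d (↑h) τ := by
  have hw := snoc_actH hd hh hτ
  have : jfun d ((↑g : Matrix (Fin (d+1)) (Fin (d+1)) ℂ) * (↑h : Matrix (Fin (d+1)) (Fin (d+1)) ℂ)) τ
      = ((↑g : Matrix (Fin (d+1)) (Fin (d+1)) ℂ) *ᵥ ((↑h : Matrix (Fin (d+1)) (Fin (d+1)) ℂ) *ᵥ Fin.snoc τ 1)) (Fin.last d) := by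
    rw [jfun, Matrix.mulVec_mulVec]
  rw [this, hw, Matrix.mulVec_smul, Pi.smul_apply, smul_eq_mul, mul_comm]
  rfl

lemma actH_mul (hd : 1 ≤ d) [NeZero d] {g h : SLC (d+1)} (hg : g ∈ SUd1 d) (hh : h ∈ SUd1 d)
    {τ : Fin d → ℂ} (hτ : τ ∈ Hdom d) :
    actH d ((↑g : Matrix (Fin (d+1)) (Fin (d+1)) ℂ) * (↑h : Matrix (Fin (d+1)) (Fin (d+1)) ℂ)) τ
      = actH d (↑g) (actH d (↑h) τ) := by
  have hjh := jfun_ne_zero hd hh hτ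
  have hjg := jfun_ne_zero hd hg (actH_mem_Hdom hd hh hτ)
  have hw := snoc_actH hd hh hτ
  funext k
  rw [actH, actH, jfun_mul hd hg hh hτ]
  have hnum : ((((↑g : Matrix (Fin (d+1)) (Fin (d+1)) ℂ) * (↑h : Matrix (Fin (d+1)) (Fin (d+1)) ℂ))) *ᵥ Fin.snoc τ 1) (Fin.castSucc k)
      = jfun d (↑h) τ * (((↑g : Matrix (Fin (d+1)) (Fin (d+1)) ℂ)) *ᵥ Fin.snoc (actH d (↑h) τ) 1) (Fin.castSucc k) := by
    rw [← Matrix.mulVec_mulVec, hw, Matrix.mulVec_smul, Pi.smul_apply, smul_eq_mul]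
  rw [hnum]
  field_simp

lemma continuous_snoc_apply (j : Fin (d+1)) :
    Continuous (fun τ : Fin d → ℂ => (Fin.snoc τ 1 : Fin (d+1) → ℂ) j) := by
  induction j using Fin.lastCases with
  | last => simpa [Fin.snoc_last] using (continuous_const : Continuous fun _ : Fin d → ℂ => (1:ℂ))
  | cast k => simpa [Fin.snoc_castSucc] using continuous_apply k

lemma continuous_mulVec_snoc (g : Matrix (Fin (d+1)) (Fin (d+1)) ℂ) (i : Fin (d+1)) :
    Continuous (fun τ : Fin d → ℂ => (g *ᵥ (Fin.snoc τ 1 : Fin (d+1) → ℂ)) i) := by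
  have : (fun τ : Fin d → ℂ => (g *ᵥ (Fin.snoc τ 1 : Fin (d+1) → ℂ)) i)
      = fun τ => ∑ j, g i j * (Fin.snoc τ 1 : Fin (d+1) → ℂ) j := by
    funext τ; rw [Matrix.mulVec, dotProduct]
  rw [this]
  exact continuous_finset_sum _ (fun j _ => continuous_const.mul (continuous_snoc_apply j))

lemma continuous_jfun (g : Matrix (Fin (d+1)) (Fin (d+1)) ℂ) :
    Continuous (jfun d g) := continuous_mulVec_snoc g (Fin.last d)

lemma continuousOn_actH (hd : 1 ≤ d) [NeZero d] {g : SLC (d+1)} (hg : g ∈ SUd1 d) :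
    ContinuousOn (actH d (↑g)) (Hdom d) := by
  rw [continuousOn_pi]
  intro k
  apply ContinuousOn.div
  · exact (continuous_mulVec_snoc _ _).continuousOn
  · exact (continuous_jfun _).continuousOn
  · exact fun τ hτ => jfun_ne_zero hd hg hτ

lemma continuousOn_jtilde (hd : 1 ≤ d) [NeZero d] {g : SLC (d+1)} (hg : g ∈ SUd1 d) :
    ContinuousOn (jtilde d (↑g)) (Hdom d) := by
  have hrw : jtilde d (↑g : Matrix (Fin (d+1)) (Fin (d+1)) ℂ)
      = fun τ => Complex.log (jfun d (↑g) τ / Xfun d (↑g)) + Complex.log (Xfun d (↑g)) := rfl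
  rw [hrw]
  apply ContinuousOn.add _ continuousOn_const
  intro τ hτ
  have hke := key_pos hd hg hτ
  have hc : ContinuousAt Complex.log (jfun d (↑g) τ / Xfun d (↑g)) :=
    continuousAt_clog (Complex.mem_slitPlane_iff.mpr (Or.inl hke))
  have hcw : ContinuousWithinAt (fun τ' => jfun d (↑g) τ' / Xfun d (↑g)) (Hdom d) τ :=
    ((continuous_jfun ((↑g : Matrix (Fin (d+1)) (Fin (d+1)) ℂ))).continuousWithinAt).div_const _
  exact ContinuousAt.comp_continuousWithinAt (f := fun τ' => jfun d (↑g) τ' / Xfun d (↑g)) hc hcw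

lemma preconnected_int_const {α : Type*} [TopologicalSpace α] {s : Set α}
    (hs : IsPreconnected s) {f : α → ℝ} (hf : ContinuousOn f s)
    (hint : ∀ x ∈ s, ∃ n : ℤ, f x = n) {a b : α} (ha : a ∈ s) (hb : b ∈ s) : f a = f b := by
  have helper : ∀ x ∈ s, ∀ y ∈ s, ¬ (f x < f y) := by
    intro x hx y hy hlt
    obtain ⟨nx, hnx⟩ := hint x hx
    obtain ⟨ny, hny⟩ := hint y hy
    have hxy : nx < ny := by
      rw [hnx, hny] at hlt; exact_mod_cast hlt
    have hmid : (nx:ℝ) + 1/2 ∈ Set.Icc (f x) (f y) := by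
      rw [hnx, hny]
      constructor
      · norm_num
      · have h1 : (nx:ℝ) + 1 ≤ ny := by exact_mod_cast hxy
        linarith
    obtain ⟨c, hc, hfc⟩ := hs.intermediate_value hx hy hf hmid
    obtain ⟨nc, hnc⟩ := hint c hc
    rw [hnc] at hfc
    have h2 : (2*nc : ℝ) = 2*nx + 1 := by linarith [hfc]
    have h3 : (2*nc : ℤ) = 2*nx + 1 := by exact_mod_cast h2
    omega
  rcases lt_trichotomy (f a) (f b) with h|h|h
  · exact absurd h (helper a ha b hb)
  · exact h
  · exact absurd h (helper b hb a ha)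

lemma two_pi_I_ne_zero' : (2 * (Real.pi : ℂ) * Complex.I) ≠ 0 := by
  simp [Real.pi_ne_zero, Complex.I_ne_zero, Complex.ofReal_ne_zero]

lemma main_const (hd2 : 2 ≤ d) {g h : SLC (d+1)} (hg : g ∈ SUd1 d) (hh : h ∈ SUd1 d) :
    ∃ n : ℤ, ∀ τ ∈ Hdom d,
      jtilde d ((↑g : Matrix (Fin (d+1)) (Fin (d+1)) ℂ) * (↑h : Matrix (Fin (d+1)) (Fin (d+1)) ℂ)) τ
          - jtilde d (↑g) (actH d (↑h) τ) - jtilde d (↑h) τ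
        = (n : ℂ) * (2 * Real.pi * Complex.I) := by
  haveI : NeZero d := ⟨by omega⟩
  have hd1 : 1 ≤ d := by omega
  have hgh : g * h ∈ SUd1 d := mul_mem hg hh
  have hcoe : ((↑(g*h) : Matrix (Fin (d+1)) (Fin (d+1)) ℂ))
      = (↑g : Matrix (Fin (d+1)) (Fin (d+1)) ℂ) * (↑h : Matrix (Fin (d+1)) (Fin (d+1)) ℂ) :=
    Matrix.SpecialLinearGroup.coe_mul g h
  set F : (Fin d → ℂ) → ℂ := fun τ =>
    jtilde d ((↑g : Matrix (Fin (d+1)) (Fin (d+1)) ℂ) * (↑h : Matrix (Fin (d+1)) (Fin (d+1)) ℂ)) τ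
      - jtilde d (↑g) (actH d (↑h) τ) - jtilde d (↑h) τ with hFdef
  have hint : ∀ τ ∈ Hdom d, ∃ n : ℤ, F τ = (n:ℂ) * (2 * Real.pi * Complex.I) := by
    intro τ hτ
    rw [← Complex.exp_eq_one_iff, hFdef]
    simp only
    rw [Complex.exp_sub, Complex.exp_sub, ← hcoe,
      exp_jtilde hd1 hgh hτ, exp_jtilde hd1 hg (actH_mem_Hdom hd1 hh hτ),
      exp_jtilde hd1 hh hτ, hcoe, jfun_mul hd1 hg hh hτ]
    rw [div_div]
    exact div_self (mul_ne_zero (jfun_ne_zero hd1 hg (actH_mem_Hdom hd1 hh hτ))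
      (jfun_ne_zero hd1 hh hτ))
  obtain ⟨n0, hn0⟩ := hint (baseTau d) (baseTau_mem_Hdom hd1)
  refine ⟨n0, ?_⟩
  intro τ hτ
  obtain ⟨n, hn⟩ := hint τ hτ
  have hcont : ContinuousOn F (Hdom d) := by
    apply ContinuousOn.sub
    apply ContinuousOn.sub
    · have := continuousOn_jtilde hd1 hgh
      rw [hcoe] at this
      exact this
    · exact (continuousOn_jtilde hd1 hg).comp (continuousOn_actH hd1 hh)
        (fun τ' hτ' => actH_mem_Hdom hd1 hh hτ')
    · exact continuousOn_jtilde hd1 hh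
  have hpre : IsPreconnected (Hdom d) := (convex_Hdom hd1).isPreconnected
  have hfim : ContinuousOn (fun τ' => (F τ').im / (2 * Real.pi)) (Hdom d) :=
    (Complex.continuous_im.comp_continuousOn hcont).div_const _
  have himv : ∀ τ' ∈ Hdom d, ∃ m : ℤ, (F τ').im / (2 * Real.pi) = m := by
    intro τ' hτ'
    obtain ⟨m, hm⟩ := hint τ' hτ'
    refine ⟨m, ?_⟩
    rw [hm]
    have : ((m:ℂ) * (2 * Real.pi * Complex.I)).im = m * (2 * Real.pi) := by
      simp [Complex.mul_im]
    rw [this]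
    field_simp
  have heq := preconnected_int_const hpre hfim himv hτ (baseTau_mem_Hdom hd1)
  rw [hn, hn0] at heq
  have him : ∀ m : ℤ, ((m:ℂ) * (2 * Real.pi * Complex.I)).im = m * (2 * Real.pi) := by
    intro m; simp [Complex.mul_im]
  rw [him n, him n0] at heq
  have hπ : (0:ℝ) < 2 * Real.pi := by positivity
  rw [mul_div_cancel_right₀ _ (ne_of_gt hπ), mul_div_cancel_right₀ _ (ne_of_gt hπ)] at heq
  have hnn : n = n0 := by exact_mod_cast heq
  rw [hnn] at hn
  exact hn

lemma sigma_spec (hd2 : 2 ≤ d) {g h : SLC (d+1)} (hg : g ∈ SUd1 d) (hh : h ∈ SUd1 d) :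
    ∀ τ ∈ Hdom d,
      (jtilde d ((↑g : Matrix (Fin (d+1)) (Fin (d+1)) ℂ) * (↑h : Matrix (Fin (d+1)) (Fin (d+1)) ℂ)) τ
          - jtilde d (↑g) (actH d (↑h) τ) - jtilde d (↑h) τ) / (2 * Real.pi * Complex.I)
        = (sigmaZ d (↑g) (↑h) : ℂ) := by
  haveI : NeZero d := ⟨by omega⟩
  have hd1 : 1 ≤ d := by omega
  obtain ⟨n, hn⟩ := main_const hd2 hg hh
  have hC : sigmaC d (↑g) (↑h) = (n:ℂ) := by
    rw [sigmaC, hn (baseTau d) (baseTau_mem_Hdom hd1),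
      mul_div_cancel_right₀ _ two_pi_I_ne_zero']
  have hZ : sigmaZ d (↑g) (↑h) = n := by
    rw [sigmaZ, hC]
    simp
  intro τ hτ
  rw [hn τ hτ, mul_div_cancel_right₀ _ two_pi_I_ne_zero', hZ]

end Lemmas

/-- For `g,h ∈ SU(d,1)`, the quantity
`(1/(2πi))(j̃(gh,τ) − j̃(g,h*τ) − j̃(h,τ))` is an integer (namely `σ(g,h)`) independent of
the choice of `τ ∈ ℋ`, and `σ` satisfies the inhomogeneous 2-cocycle identity. -/
theorem statement6 (d : ℕ) (hd : 2 ≤ d) (g h k : SLC (d+1))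
    (hg : g ∈ SUd1 d) (hh : h ∈ SUd1 d) (hk : k ∈ SUd1 d) :
    (∀ τ ∈ Hdom d,
      (jtilde d ((↑g : Matrix (Fin (d+1)) (Fin (d+1)) ℂ) * (↑h : Matrix (Fin (d+1)) (Fin (d+1)) ℂ)) τ
          - jtilde d (↑g) (actH d (↑h) τ) - jtilde d (↑h) τ) / (2 * Real.pi * Complex.I)
        = (sigmaZ d (↑g) (↑h) : ℂ)) ∧
    sigmaZ d (↑g) (↑h) + sigmaZ d ((↑g : Matrix (Fin (d+1)) (Fin (d+1)) ℂ) * (↑h : Matrix (Fin (d+1)) (Fin (d+1)) ℂ)) (↑k)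
      = sigmaZ d (↑g) ((↑h : Matrix (Fin (d+1)) (Fin (d+1)) ℂ) * (↑k : Matrix (Fin (d+1)) (Fin (d+1)) ℂ))
          + sigmaZ d (↑h) (↑k) := by
  haveI : NeZero d := ⟨by omega⟩
  have hd1 : 1 ≤ d := by omega
  have hgh : g * h ∈ SUd1 d := mul_mem hg hh
  have hhk : h * k ∈ SUd1 d := mul_mem hh hk
  refine ⟨sigma_spec hd hg hh, ?_⟩
  have hτ0 : baseTau d ∈ Hdom d := baseTau_mem_Hdom hd1
  have hkτ0 : actH d (↑k) (baseTau d) ∈ Hdom d := actH_mem_Hdom hd1 hk hτ0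
  have A := sigma_spec hd hg hh _ hkτ0
  have B := sigma_spec hd hgh hk _ hτ0
  have C := sigma_spec hd hg hhk _ hτ0
  have D := sigma_spec hd hh hk _ hτ0
  rw [Matrix.SpecialLinearGroup.coe_mul] at B C
  rw [mul_assoc] at B
  rw [actH_mul hd1 hh hk hτ0] at C
  have hcast : ((sigmaZ d (↑g) (↑h) : ℂ)
        + (sigmaZ d ((↑g : Matrix (Fin (d+1)) (Fin (d+1)) ℂ) * (↑h : Matrix (Fin (d+1)) (Fin (d+1)) ℂ)) (↑k) : ℂ))
      = ((sigmaZ d (↑g) ((↑h : Matrix (Fin (d+1)) (Fin (d+1)) ℂ) * (↑k : Matrix (Fin (d+1)) (Fin (d+1)) ℂ)) : ℂ)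
        + (sigmaZ d (↑h) (↑k) : ℂ)) := by
    rw [← A, ← B, ← C, ← D]
    ring
  exact_mod_cast hcast
end
end

section
/- The principal congruence subgroup Γ(√-3) is the internal direct product of Υ and the central subgroup μ₃ = {I₃, ζI₃, ζ²I₃}: μ₃ ⊆ Γ(√-3), Υ is a subgroup of index 3 in Γ(√-3), Υ ∩ μ₃ = {I₃}, and every element of Γ(√-3) can be written uniquely as u·c with u ∈ Υ and c ∈ μ₃. -/
open Matrix Complex
open scoped ComplexOrder

noncomputable section

/-- The primitive cube root of unity `ζ = e^{2πi/3}`. -/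
def zeta3 : ℂ := Complex.exp (2 * Real.pi * Complex.I / 3)

lemma zeta3_pow_three : zeta3 ^ 3 = 1 := by
  rw [zeta3, ← Complex.exp_nat_mul]
  rw [show (3 : ℕ) * (2 * ↑Real.pi * Complex.I / 3) = 2 * ↑Real.pi * Complex.I by
    push_cast; ring]
  exact Complex.exp_two_pi_mul_I

lemma zeta3_ne_one : zeta3 ≠ 1 := by
  have him : zeta3.im = Real.sin (2 * Real.pi / 3) := by
    rw [zeta3, show 2 * (Real.pi : ℂ) * Complex.I / 3 = (2 * Real.pi / 3 : ℝ) * Complex.I by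
      push_cast; ring]
    rw [Complex.exp_ofReal_mul_I_im]
  have hpos : 0 < Real.sin (2 * Real.pi / 3) := by
    apply Real.sin_pos_of_pos_of_lt_pi
    · positivity
    · nlinarith [Real.pi_pos]
  intro h
  rw [h] at him
  simp only [Complex.one_im] at him
  linarith

lemma zeta3_quad : zeta3 ^ 2 + zeta3 + 1 = 0 := by
  have h : (zeta3 - 1) * (zeta3 ^ 2 + zeta3 + 1) = 0 := by
    have : (zeta3 - 1) * (zeta3 ^ 2 + zeta3 + 1) = zeta3 ^ 3 - 1 := by ring
    rw [this, zeta3_pow_three, sub_self]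
  rcases mul_eq_zero.mp h with h1 | h2
  · exact absurd (sub_eq_zero.mp h1) zeta3_ne_one
  · exact h2

lemma zeta3_conj : starRingEnd ℂ zeta3 = zeta3 ^ 2 := by
  have habs : ‖zeta3‖ = 1 := by
    rw [zeta3, show 2 * (Real.pi : ℂ) * Complex.I / 3 = (2 * Real.pi / 3 : ℝ) * Complex.I by
      push_cast; ring]
    exact Complex.norm_exp_ofReal_mul_I _
  have h1 : starRingEnd ℂ zeta3 * zeta3 = 1 := by
    rw [mul_comm, Complex.mul_conj, Complex.normSq_eq_norm_sq, habs]; norm_num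
  have h2 : zeta3 ^ 2 * zeta3 = 1 := by
    rw [← pow_succ, zeta3_pow_three]
  have hz : zeta3 ≠ 0 := by
    intro h
    rw [h] at habs; simp at habs
  exact mul_right_cancel₀ hz (h1.trans h2.symm)

/-- The ring of Eisenstein integers `ℤ[ζ]`, as a subring of `ℂ`. -/
def Eis : Subring ℂ := Subring.closure {zeta3}

lemma zeta3_mem_Eis : zeta3 ∈ Eis := Subring.subset_closure rfl

lemma Eis_conj_mem {x : ℂ} (hx : x ∈ Eis) : starRingEnd ℂ x ∈ Eis := by
  induction hx using Subring.closure_induction with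
  | mem y hy =>
      rcases hy with rfl
      rw [zeta3_conj]
      exact pow_mem zeta3_mem_Eis 2
  | zero => simpa using Eis.zero_mem
  | one => simpa using Eis.one_mem
  | add a b _ _ ha hb => rw [map_add]; exact Eis.add_mem ha hb
  | neg a _ ha => rw [map_neg]; exact Eis.neg_mem ha
  | mul a b _ _ ha hb => rw [_root_.map_mul]; exact Eis.mul_mem ha hb

/-- The square root `√-3 = 2ζ + 1` of `-3` in `ℤ[ζ]`. -/
def sqrt3 : ℂ := 2 * zeta3 + 1

lemma sqrt3_mem_Eis : sqrt3 ∈ Eis := by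
  refine Eis.add_mem (Eis.mul_mem ?_ zeta3_mem_Eis) Eis.one_mem
  rw [show (2 : ℂ) = 1 + 1 by norm_num]
  exact Eis.add_mem Eis.one_mem Eis.one_mem

lemma sqrt3_sq : sqrt3 * sqrt3 = -3 := by
  have h := zeta3_quad
  rw [sqrt3]; ring_nf; linear_combination 4 * h
/-- The set of multiples of `c` by Eisenstein integers (e.g. the ideal `√-3·ℤ[ζ]` of `ℤ[ζ]`,
viewed inside `ℂ`). -/
def mulSet (c : ℂ) : Set ℂ := {x | ∃ y ∈ Eis, x = c * y}

lemma mulSet_zero (c : ℂ) : (0 : ℂ) ∈ mulSet c := ⟨0, Eis.zero_mem, by ring⟩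

lemma mulSet_add {c x y : ℂ} (hx : x ∈ mulSet c) (hy : y ∈ mulSet c) :
    x + y ∈ mulSet c := by
  obtain ⟨a, ha, rfl⟩ := hx; obtain ⟨b, hb, rfl⟩ := hy
  exact ⟨a + b, Eis.add_mem ha hb, by ring⟩

lemma mulSet_neg {c x : ℂ} (hx : x ∈ mulSet c) : -x ∈ mulSet c := by
  obtain ⟨a, ha, rfl⟩ := hx
  exact ⟨-a, Eis.neg_mem ha, by ring⟩

lemma mulSet_mul_left {c x y : ℂ} (hx : x ∈ Eis) (hy : y ∈ mulSet c) :
    x * y ∈ mulSet c := by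
  obtain ⟨a, ha, rfl⟩ := hy
  exact ⟨x * a, Eis.mul_mem hx ha, by ring⟩

lemma mulSet_mul_right {c x y : ℂ} (hx : x ∈ mulSet c) (hy : y ∈ Eis) :
    x * y ∈ mulSet c := by
  obtain ⟨a, ha, rfl⟩ := hx
  exact ⟨a * y, Eis.mul_mem ha hy, by ring⟩

lemma sqrt3_mul_sqrt3 {x y : ℂ} (hx : x ∈ mulSet sqrt3) (hy : y ∈ mulSet sqrt3) :
    x * y ∈ mulSet 3 := by
  obtain ⟨a, ha, rfl⟩ := hx; obtain ⟨b, hb, rfl⟩ := hy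
  refine ⟨-(a * b), Eis.neg_mem (Eis.mul_mem ha hb), ?_⟩
  have h := sqrt3_sq
  linear_combination a * b * h

lemma three_subset_sqrt3 {x : ℂ} (hx : x ∈ mulSet 3) : x ∈ mulSet sqrt3 := by
  obtain ⟨a, ha, rfl⟩ := hx
  refine ⟨-(sqrt3 * a), Eis.neg_mem (Eis.mul_mem sqrt3_mem_Eis ha), ?_⟩
  have h := sqrt3_sq
  linear_combination a * h

lemma Jmat2_entries_mem : ∀ i j, Jmat 2 i j ∈ Eis := by
  intro i j
  rw [Jmat]
  dsimp only [Matrix.of_apply]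
  split_ifs <;> first | exact Eis.one_mem | exact Eis.zero_mem

lemma entries_mul_mem {A B : Matrix (Fin 3) (Fin 3) ℂ}
    (hA : ∀ i j, A i j ∈ Eis) (hB : ∀ i j, B i j ∈ Eis) :
    ∀ i j, (A * B) i j ∈ Eis := by
  intro i j
  rw [Matrix.mul_apply]
  exact Subring.sum_mem _ fun k _ => Eis.mul_mem (hA i k) (hB k j)

lemma Jmat2_mul_self : Jmat 2 * Jmat 2 = 1 := by
  ext i j
  rw [Matrix.mul_apply, Fin.sum_univ_three]
  fin_cases i <;> fin_cases j <;>
    simp [Jmat, Matrix.one_apply, Fin.last]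

/-- The group `Γ = {g ∈ SL₃(ℤ[ζ]) : conj(g)ᵀ J g = J}`, a subgroup of `SU(2,1)`. -/
def GammaEis : Subgroup (SLC 3) where
  carrier := {g | (∀ i j, (↑g : Matrix (Fin 3) (Fin 3) ℂ) i j ∈ Eis) ∧
    (↑g : Matrix (Fin 3) (Fin 3) ℂ)ᴴ * Jmat 2 * ↑g = Jmat 2}
  one_mem' := by
    constructor
    · intro i j
      rw [Matrix.SpecialLinearGroup.coe_one, Matrix.one_apply]
      split_ifs <;> first | exact Eis.one_mem | exact Eis.zero_mem
    · simp
  mul_mem' := by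
    intro a b ha hb
    obtain ⟨ha1, ha2⟩ := ha; obtain ⟨hb1, hb2⟩ := hb
    constructor
    · intro i j
      rw [Matrix.SpecialLinearGroup.coe_mul]
      exact entries_mul_mem ha1 hb1 i j
    · rw [Matrix.SpecialLinearGroup.coe_mul, Matrix.conjTranspose_mul]
      calc (↑b)ᴴ * (↑a)ᴴ * Jmat 2 * ((↑a : Matrix (Fin 3) (Fin 3) ℂ) * ↑b)
          = (↑b)ᴴ * ((↑a : Matrix (Fin 3) (Fin 3) ℂ)ᴴ * Jmat 2 * ↑a) * ↑b := by
            simp only [Matrix.mul_assoc]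
        _ = Jmat 2 := by rw [ha2]; exact hb2
  inv_mem' := by
    intro a ha
    obtain ⟨ha1, ha2⟩ := ha
    set A : Matrix (Fin 3) (Fin 3) ℂ := ↑a with hA
    set B : Matrix (Fin 3) (Fin 3) ℂ := ↑(a⁻¹) with hB
    have hAB : A * B = 1 := by
      rw [hA, hB, ← Matrix.SpecialLinearGroup.coe_mul, mul_inv_cancel]; simp
    have hJJ := Jmat2_mul_self
    have hform : B = Jmat 2 * Aᴴ * Jmat 2 := by
      have h1 : (Jmat 2 * Aᴴ * Jmat 2) * A = 1 := by
        calc (Jmat 2 * Aᴴ * Jmat 2) * A = Jmat 2 * (Aᴴ * Jmat 2 * A) := by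
              simp only [Matrix.mul_assoc]
          _ = Jmat 2 * Jmat 2 := by rw [ha2]
          _ = 1 := hJJ
      calc B = 1 * B := (Matrix.one_mul _).symm
        _ = ((Jmat 2 * Aᴴ * Jmat 2) * A) * B := by rw [h1]
        _ = (Jmat 2 * Aᴴ * Jmat 2) * (A * B) := by simp only [Matrix.mul_assoc]
        _ = Jmat 2 * Aᴴ * Jmat 2 := by rw [hAB, Matrix.mul_one]
    have hAH : ∀ i j, Aᴴ i j ∈ Eis := by
      intro i j
      rw [Matrix.conjTranspose_apply]
      exact Eis_conj_mem (ha1 j i)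
    have hBent : ∀ i j, B i j ∈ Eis := by
      rw [hform]
      exact entries_mul_mem (entries_mul_mem Jmat2_entries_mem hAH) Jmat2_entries_mem
    constructor
    · exact hBent
    · calc Bᴴ * Jmat 2 * B
          = Bᴴ * (Aᴴ * Jmat 2 * A) * B := by rw [ha2]
        _ = (A * B)ᴴ * Jmat 2 * (A * B) := by
            rw [Matrix.conjTranspose_mul]; simp only [Matrix.mul_assoc]
        _ = Jmat 2 := by rw [hAB]; simp
/-- The principal congruence subgroup `Γ(√-3)` of level `√-3` in `GammaEis`. -/
def GammaS3 : Subgroup (SLC 3) where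
  carrier := {g | g ∈ GammaEis ∧
    ∀ i j, ((↑g : Matrix (Fin 3) (Fin 3) ℂ) i j - (1 : Matrix (Fin 3) (Fin 3) ℂ) i j)
      ∈ mulSet sqrt3}
  one_mem' := ⟨GammaEis.one_mem, by intro i j; simp [mulSet_zero]⟩
  mul_mem' := by
    intro a b ha hb
    refine ⟨GammaEis.mul_mem ha.1 hb.1, ?_⟩
    intro i j
    set A : Matrix (Fin 3) (Fin 3) ℂ := ↑a with hA
    set B : Matrix (Fin 3) (Fin 3) ℂ := ↑b with hB
    have key : A * B - 1 = (A - 1) * (B - 1) + (A - 1) + (B - 1) := by noncomm_ring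
    have : ((↑(a * b) : Matrix (Fin 3) (Fin 3) ℂ) i j - (1 : Matrix (Fin 3) (Fin 3) ℂ) i j)
        = ((A - 1) * (B - 1)) i j + (A - 1) i j + (B - 1) i j := by
      rw [Matrix.SpecialLinearGroup.coe_mul, ← Matrix.sub_apply, key]
      simp [Matrix.add_apply]
    rw [this]
    have hprod : ((A - 1) * (B - 1)) i j ∈ mulSet sqrt3 := by
      rw [Matrix.mul_apply]
      refine Finset.sum_induction _ _ (fun x y hx hy => mulSet_add hx hy) (mulSet_zero _) ?_
      intro k _
      refine three_subset_sqrt3 (sqrt3_mul_sqrt3 ?_ ?_)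
      · simpa [Matrix.sub_apply] using ha.2 i k
      · simpa [Matrix.sub_apply] using hb.2 k j
    refine mulSet_add (mulSet_add hprod ?_) ?_
    · simpa [Matrix.sub_apply] using ha.2 i j
    · simpa [Matrix.sub_apply] using hb.2 i j
  inv_mem' := by
    intro a ha
    refine ⟨GammaEis.inv_mem ha.1, ?_⟩
    intro i j
    set A : Matrix (Fin 3) (Fin 3) ℂ := ↑a with hA
    set B : Matrix (Fin 3) (Fin 3) ℂ := ↑(a⁻¹) with hB
    have hBA : B * A = 1 := by
      rw [hA, hB, ← Matrix.SpecialLinearGroup.coe_mul, inv_mul_cancel]; simp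
    have key : B - 1 = B * (1 - A) := by rw [Matrix.mul_sub, Matrix.mul_one, hBA]
    have hBent : ∀ i j, B i j ∈ Eis := ((GammaEis.inv_mem ha.1).1 : _)
    have : (B i j - (1 : Matrix (Fin 3) (Fin 3) ℂ) i j) = (B * (1 - A)) i j := by
      rw [← key]; simp [Matrix.sub_apply]
    rw [this, Matrix.mul_apply]
    refine Finset.sum_induction _ _ (fun x y hx hy => mulSet_add hx hy) (mulSet_zero _) ?_
    intro k _
    refine mulSet_mul_left (hBent i k) ?_
    have : (1 - A) k j = -(A k j - (1 : Matrix (Fin 3) (Fin 3) ℂ) k j) := by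
      simp [Matrix.sub_apply]
    rw [this]
    exact mulSet_neg (ha.2 k j)

/-- The index 3 subgroup `Υ = {g ∈ Γ(√-3) : g₁₁ ≡ 1 mod 3}` of `Γ(√-3)`. -/
def Upsilon : Subgroup (SLC 3) where
  carrier := {g | g ∈ GammaS3 ∧ ((↑g : Matrix (Fin 3) (Fin 3) ℂ) 0 0 - 1) ∈ mulSet 3}
  one_mem' := ⟨GammaS3.one_mem, by simp [mulSet_zero]⟩
  mul_mem' := by
    intro a b ha hb
    refine ⟨GammaS3.mul_mem ha.1 hb.1, ?_⟩
    set A : Matrix (Fin 3) (Fin 3) ℂ := ↑a with hA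
    set B : Matrix (Fin 3) (Fin 3) ℂ := ↑b with hB
    have hAe : ∀ i j, A i j ∈ Eis := ha.1.1.1
    have hBe : ∀ i j, B i j ∈ Eis := hb.1.1.1
    have hoffA : ∀ i j, i ≠ j → A i j ∈ mulSet sqrt3 := by
      intro i j hij
      have := ha.1.2 i j
      simpa [Matrix.one_apply, hij] using this
    have hoffB : ∀ i j, i ≠ j → B i j ∈ mulSet sqrt3 := by
      intro i j hij
      have := hb.1.2 i j
      simpa [Matrix.one_apply, hij] using this
    have hmul : (↑(a * b) : Matrix (Fin 3) (Fin 3) ℂ) 0 0 - 1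
        = (A 0 0 - 1) * (B 0 0 - 1) + (A 0 0 - 1) + (B 0 0 - 1)
          + A 0 1 * B 1 0 + A 0 2 * B 2 0 := by
      rw [Matrix.SpecialLinearGroup.coe_mul, Matrix.mul_apply, Fin.sum_univ_three]
      ring
    rw [hmul]
    refine mulSet_add (mulSet_add (mulSet_add (mulSet_add ?_ ha.2) hb.2) ?_) ?_
    · exact mulSet_mul_right ha.2 (Eis.sub_mem (hBe 0 0) Eis.one_mem)
    · exact sqrt3_mul_sqrt3 (hoffA 0 1 (by decide)) (hoffB 1 0 (by decide))
    · exact sqrt3_mul_sqrt3 (hoffA 0 2 (by decide)) (hoffB 2 0 (by decide))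
  inv_mem' := by
    intro a ha
    have hinv : a⁻¹ ∈ GammaS3 := GammaS3.inv_mem ha.1
    refine ⟨hinv, ?_⟩
    set A : Matrix (Fin 3) (Fin 3) ℂ := ↑a with hA
    set B : Matrix (Fin 3) (Fin 3) ℂ := ↑(a⁻¹) with hB
    have hBA : B * A = 1 := by
      rw [hA, hB, ← Matrix.SpecialLinearGroup.coe_mul, inv_mul_cancel]; simp
    have hBe : ∀ i j, B i j ∈ Eis := hinv.1.1
    have hoffA : ∀ i j, i ≠ j → A i j ∈ mulSet sqrt3 := by
      intro i j hij
      have := ha.1.2 i j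
      simpa [Matrix.one_apply, hij] using this
    have hoffB : ∀ i j, i ≠ j → B i j ∈ mulSet sqrt3 := by
      intro i j hij
      have := hinv.2 i j
      simpa only [Matrix.one_apply, hij, if_false, sub_zero] using this
    have h00 : B 0 0 * A 0 0 + B 0 1 * A 1 0 + B 0 2 * A 2 0 = 1 := by
      have := congrArg (fun M : Matrix (Fin 3) (Fin 3) ℂ => M 0 0) hBA
      simpa [Matrix.mul_apply, Fin.sum_univ_three, Matrix.one_apply] using this
    have key : B 0 0 - 1
        = -(B 0 0 * (A 0 0 - 1)) + -(B 0 1 * A 1 0) + -(B 0 2 * A 2 0) := by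
      linear_combination h00
    rw [key]
    refine mulSet_add (mulSet_add ?_ ?_) ?_
    · exact mulSet_neg (mulSet_mul_left (hBe 0 0) ha.2)
    · exact mulSet_neg (sqrt3_mul_sqrt3 (hoffB 0 1 (by decide)) (hoffA 1 0 (by decide)))
    · exact mulSet_neg (sqrt3_mul_sqrt3 (hoffB 0 2 (by decide)) (hoffA 2 0 (by decide)))
/-- The unipotent upper-triangular matrix `n(z,x)`. -/
def nMat (z : ℂ) (x : ℤ) : Matrix (Fin 3) (Fin 3) ℂ :=
  !![1, sqrt3 * z, (-3 * (z * starRingEnd ℂ z) + (x : ℂ) * sqrt3) / 2;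
     0, 1, sqrt3 * starRingEnd ℂ z;
     0, 0, 1]

/-- `n(z,x)` as an element of `SL₃(ℂ)`. -/
def nSL (z : ℂ) (x : ℤ) : SLC 3 :=
  ⟨nMat z x, by
    simp [nMat, Matrix.det_fin_three, Matrix.vecHead, Matrix.vecTail]⟩

/-- The transpose `n(z,x)ᵀ` as an element of `SL₃(ℂ)`. -/
def ntSL (z : ℂ) (x : ℤ) : SLC 3 :=
  ⟨(nMat z x)ᵀ, by
    rw [Matrix.det_transpose]
    simp [nMat, Matrix.det_fin_three, Matrix.vecHead, Matrix.vecTail]⟩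

/-- The congruence `x ≡ N(z) mod 2` (inside `ℤ[ζ]`). -/
def parityOK (z : ℂ) (x : ℤ) : Prop := ((x : ℂ) - z * starRingEnd ℂ z) ∈ mulSet 2

/-- The generating set of `Υ`: the matrices `n(z,x)` and their transposes, for
`z ∈ ℤ[ζ]` and `x ∈ ℤ` with `x ≡ N(z) mod 2`. -/
def genSet : Set (SLC 3) :=
  {g | ∃ (z : ℂ) (x : ℤ), z ∈ Eis ∧ parityOK z x ∧ (g = nSL z x ∨ g = ntSL z x)}

/-- The scalar matrix `ζ·I₃` as an element of `SL₃(ℂ)`. -/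
def zISL : SLC 3 :=
  ⟨zeta3 • (1 : Matrix (Fin 3) (Fin 3) ℂ), by
    rw [Matrix.det_smul]
    simp [zeta3_pow_three]⟩

/-- The centre `μ₃ = {I₃, ζI₃, ζ²I₃}` of `SU(2,1)`, generated by `ζ·I₃`. -/
def muThree : Subgroup (SLC 3) := Subgroup.zpowers zISL
/-! ### Auxiliary lemmas for statement9 -/

lemma zeta3_im_pos : 0 < zeta3.im := by
  have him : zeta3.im = Real.sin (2 * Real.pi / 3) := by
    rw [zeta3, show 2 * (Real.pi : ℂ) * Complex.I / 3 = (2 * Real.pi / 3 : ℝ) * Complex.I by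
      push_cast; ring]
    rw [Complex.exp_ofReal_mul_I_im]
  rw [him]
  apply Real.sin_pos_of_pos_of_lt_pi
  · positivity
  · nlinarith [Real.pi_pos]

lemma int_combo_eq_zero {m n : ℤ} (h : (m : ℂ) + n * zeta3 = 0) : m = 0 ∧ n = 0 := by
  have him := congrArg Complex.im h
  simp only [Complex.add_im, Complex.mul_im, Complex.intCast_im, Complex.intCast_re,
    Complex.zero_im, zero_mul, add_zero, mul_zero, zero_add] at him
  have hn : (n : ℝ) = 0 := by
    rcases mul_eq_zero.mp him with h' | h'
    · exact h'
    · exact absurd h' (ne_of_gt zeta3_im_pos)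
  have hn0 : n = 0 := by exact_mod_cast hn
  subst hn0
  simp only [Int.cast_zero, zero_mul, add_zero] at h
  exact ⟨by exact_mod_cast h, rfl⟩

/-- Explicit description of the Eisenstein integers. -/
def EisS : Subring ℂ where
  carrier := {x | ∃ a b : ℤ, x = a + b * zeta3}
  one_mem' := ⟨1, 0, by push_cast; ring⟩
  zero_mem' := ⟨0, 0, by push_cast; ring⟩
  add_mem' := by
    rintro x y ⟨a, b, rfl⟩ ⟨c, d, rfl⟩
    exact ⟨a + c, b + d, by push_cast; ring⟩
  neg_mem' := by
    rintro x ⟨a, b, rfl⟩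
    exact ⟨-a, -b, by push_cast; ring⟩
  mul_mem' := by
    rintro x y ⟨a, b, rfl⟩ ⟨c, d, rfl⟩
    refine ⟨a * c - b * d, a * d + b * c - b * d, ?_⟩
    push_cast
    linear_combination (b * d : ℂ) * zeta3_quad

lemma mem_Eis_iff {x : ℂ} : x ∈ Eis ↔ ∃ a b : ℤ, x = a + b * zeta3 := by
  constructor
  · intro hx
    have hle : Eis ≤ EisS := by
      rw [Eis]
      refine Subring.closure_le.mpr ?_
      rintro y rfl
      exact ⟨0, 1, by push_cast; ring⟩
    exact hle hx
  · rintro ⟨a, b, rfl⟩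
    exact Eis.add_mem (intCast_mem Eis a)
      (Eis.mul_mem (intCast_mem Eis b) zeta3_mem_Eis)

lemma sqrt3_ne_zero : sqrt3 ≠ 0 := by
  intro h
  have := sqrt3_sq
  rw [h, mul_zero] at this
  norm_num at this

lemma zeta3_sub_one_eq : zeta3 - 1 = sqrt3 * (zeta3 + 1) := by
  rw [sqrt3]
  linear_combination -2 * zeta3_quad

lemma zeta3_sq_sub_one_eq : zeta3 * zeta3 - 1 = sqrt3 * zeta3 := by
  rw [sqrt3]
  linear_combination -zeta3_quad

lemma zeta3_sub_one_mem : zeta3 - 1 ∈ mulSet sqrt3 :=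
  ⟨zeta3 + 1, Eis.add_mem zeta3_mem_Eis Eis.one_mem, zeta3_sub_one_eq⟩

lemma mulSet_sub {c x y : ℂ} (hx : x ∈ mulSet c) (hy : y ∈ mulSet c) :
    x - y ∈ mulSet c := by
  rw [sub_eq_add_neg]; exact mulSet_add hx (mulSet_neg hy)

lemma int_mem_sqrt3 {n : ℤ} (h : (n : ℂ) ∈ mulSet sqrt3) : (3 : ℤ) ∣ n := by
  obtain ⟨y, hy, hn⟩ := h
  obtain ⟨a, b, rfl⟩ := mem_Eis_iff.mp hy
  have key : ((a - 2 * b - n : ℤ) : ℂ) + ((2 * a - b : ℤ) : ℂ) * zeta3 = 0 := by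
    push_cast
    rw [sqrt3] at hn
    linear_combination -hn - 2 * (b : ℂ) * zeta3_quad
  obtain ⟨h1, h2⟩ := int_combo_eq_zero key
  refine ⟨-a, by omega⟩

lemma zeta3_sub_one_not_mem3 : zeta3 - 1 ∉ mulSet 3 := by
  rintro ⟨y, hy, hxy⟩
  obtain ⟨a, b, rfl⟩ := mem_Eis_iff.mp hy
  have key : ((3 * a + 1 : ℤ) : ℂ) + ((3 * b - 1 : ℤ) : ℂ) * zeta3 = 0 := by
    push_cast
    linear_combination -hxy
  obtain ⟨h1, h2⟩ := int_combo_eq_zero key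
  omega

lemma zeta3_sq_sub_one_not_mem3 : zeta3 * zeta3 - 1 ∉ mulSet 3 := by
  rintro ⟨y, hy, hxy⟩
  obtain ⟨a, b, rfl⟩ := mem_Eis_iff.mp hy
  have key : ((3 * a + 2 : ℤ) : ℂ) + ((3 * b + 1 : ℤ) : ℂ) * zeta3 = 0 := by
    push_cast
    linear_combination -hxy + zeta3_quad
  obtain ⟨h1, h2⟩ := int_combo_eq_zero key
  omega

open scoped Classical in
/-- Reduction of an Eisenstein integer modulo `√-3`, valued in `ZMod 3`. -/
noncomputable def resOf (x : ℂ) : ZMod 3 :=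
  if h : ∃ m : ℤ, (x - m) ∈ mulSet sqrt3 then ((h.choose : ℤ) : ZMod 3) else 0

lemma resOf_spec {x : ℂ} {m : ℤ} (hm : (x - m) ∈ mulSet sqrt3) :
    resOf x = (m : ZMod 3) := by
  classical
  have h : ∃ m : ℤ, (x - m) ∈ mulSet sqrt3 := ⟨m, hm⟩
  rw [resOf, dif_pos h]
  have hm' := h.choose_spec
  have hdiff : ((h.choose - m : ℤ) : ℂ) ∈ mulSet sqrt3 := by
    push_cast
    have : ((h.choose : ℂ) - m) = (x - m) - (x - h.choose) := by ring
    rw [this]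
    exact mulSet_sub hm hm'
  have hdvd : (3 : ℤ) ∣ (h.choose - m) := int_mem_sqrt3 hdiff
  have h0 : ((h.choose - m : ℤ) : ZMod 3) = 0 := by
    rwa [ZMod.intCast_zmod_eq_zero_iff_dvd]
  rw [Int.cast_sub, sub_eq_zero] at h0
  exact h0

lemma exists_res {x : ℂ} (hx : x ∈ Eis) : ∃ m : ℤ, (x - m) ∈ mulSet sqrt3 := by
  obtain ⟨a, b, rfl⟩ := mem_Eis_iff.mp hx
  refine ⟨a + b, ⟨(zeta3 + 1) * b, Eis.mul_mem (Eis.add_mem zeta3_mem_Eis Eis.one_mem)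
    (intCast_mem Eis b), ?_⟩⟩
  push_cast
  linear_combination (b : ℂ) * zeta3_sub_one_eq

lemma resOf_eq_zero_iff {x : ℂ} (hx : x ∈ Eis) :
    resOf x = 0 ↔ x ∈ mulSet sqrt3 := by
  constructor
  · intro h0
    obtain ⟨m, hm⟩ := exists_res hx
    have := resOf_spec hm
    rw [h0] at this
    have hdvd : (3 : ℤ) ∣ m := by
      rwa [eq_comm, ZMod.intCast_zmod_eq_zero_iff_dvd] at this
    obtain ⟨k, rfl⟩ := hdvd
    have h3 : ((3 * k : ℤ) : ℂ) ∈ mulSet sqrt3 := by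
      refine three_subset_sqrt3 ⟨k, intCast_mem Eis k, by push_cast; ring⟩
    have := mulSet_add hm h3
    simpa using this
  · intro hx3
    have : x - (0 : ℤ) ∈ mulSet sqrt3 := by simpa using hx3
    rw [resOf_spec this]
    simp

/-- The "logarithmic derivative at the corner": `w(g) = (g₀₀ - 1)/√-3`. -/
noncomputable def wOf (g : SLC 3) : ℂ :=
  ((g : Matrix (Fin 3) (Fin 3) ℂ) 0 0 - 1) / sqrt3

lemma wOf_mul_sqrt3 (g : SLC 3) :
    sqrt3 * wOf g = (g : Matrix (Fin 3) (Fin 3) ℂ) 0 0 - 1 := by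
  rw [wOf, mul_div_cancel₀ _ sqrt3_ne_zero]

lemma wOf_mem_Eis {g : SLC 3} (hg : g ∈ GammaS3) : wOf g ∈ Eis := by
  have h := hg.2 0 0
  simp only [Matrix.one_apply_eq] at h
  obtain ⟨y, hy, hxy⟩ := h
  have : wOf g = y := by
    rw [wOf, hxy, mul_comm, mul_div_assoc, div_self sqrt3_ne_zero, mul_one]
  rw [this]; exact hy

lemma wOf_mem_sqrt3_iff {g : SLC 3} (hg : g ∈ GammaS3) :
    wOf g ∈ mulSet sqrt3 ↔
      ((g : Matrix (Fin 3) (Fin 3) ℂ) 0 0 - 1) ∈ mulSet 3 := by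
  constructor
  · rintro ⟨y, hy, hwy⟩
    refine ⟨-y, Eis.neg_mem hy, ?_⟩
    have := wOf_mul_sqrt3 g
    rw [hwy] at this
    rw [← this, ← mul_assoc, sqrt3_sq]
    ring
  · rintro ⟨y, hy, h3y⟩
    refine ⟨-y, Eis.neg_mem hy, ?_⟩
    have hs := wOf_mul_sqrt3 g
    rw [h3y] at hs
    have h2 : sqrt3 * wOf g = sqrt3 * (sqrt3 * -y) := by
      rw [hs, ← mul_assoc, sqrt3_sq]; ring
    exact mul_left_cancel₀ sqrt3_ne_zero h2

lemma mem_Upsilon_iff {g : SLC 3} (hg : g ∈ GammaS3) :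
    g ∈ Upsilon ↔ resOf (wOf g) = 0 := by
  rw [resOf_eq_zero_iff (wOf_mem_Eis hg), wOf_mem_sqrt3_iff hg]
  constructor
  · intro h; exact h.2
  · intro h; exact ⟨hg, h⟩

lemma mul00_congr {a b : SLC 3} (ha : a ∈ GammaS3) (hb : b ∈ GammaS3) :
    ∃ E ∈ mulSet 3,
      ((a * b : SLC 3) : Matrix (Fin 3) (Fin 3) ℂ) 0 0 - 1 =
        ((a : Matrix (Fin 3) (Fin 3) ℂ) 0 0 - 1) +
        ((b : Matrix (Fin 3) (Fin 3) ℂ) 0 0 - 1) + E := by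
  set A : Matrix (Fin 3) (Fin 3) ℂ := ↑a with hA
  set B : Matrix (Fin 3) (Fin 3) ℂ := ↑b with hB
  have hoffA : ∀ i j, i ≠ j → A i j ∈ mulSet sqrt3 := by
    intro i j hij
    have := ha.2 i j
    simpa [Matrix.one_apply, hij] using this
  have hoffB : ∀ i j, i ≠ j → B i j ∈ mulSet sqrt3 := by
    intro i j hij
    have := hb.2 i j
    simpa [Matrix.one_apply, hij] using this
  have hdA : A 0 0 - 1 ∈ mulSet sqrt3 := by
    have := ha.2 0 0; simpa using this
  have hdB : B 0 0 - 1 ∈ mulSet sqrt3 := by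
    have := hb.2 0 0; simpa using this
  refine ⟨(A 0 0 - 1) * (B 0 0 - 1) + A 0 1 * B 1 0 + A 0 2 * B 2 0, ?_, ?_⟩
  · refine mulSet_add (mulSet_add (sqrt3_mul_sqrt3 hdA hdB) ?_) ?_
    · exact sqrt3_mul_sqrt3 (hoffA 0 1 (by decide)) (hoffB 1 0 (by decide))
    · exact sqrt3_mul_sqrt3 (hoffA 0 2 (by decide)) (hoffB 2 0 (by decide))
  · rw [Matrix.SpecialLinearGroup.coe_mul, Matrix.mul_apply, Fin.sum_univ_three]
    ring

lemma mulSet3_div_sqrt3 {E : ℂ} (hE : E ∈ mulSet 3) : E / sqrt3 ∈ mulSet sqrt3 := by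
  obtain ⟨y, hy, rfl⟩ := hE
  refine ⟨-y, Eis.neg_mem hy, ?_⟩
  rw [div_eq_iff sqrt3_ne_zero]
  have := sqrt3_sq
  linear_combination y * this

/-- The residue homomorphism `Γ(√-3) → ℤ/3`. -/
noncomputable def phi3 : ↥GammaS3 →* Multiplicative (ZMod 3) where
  toFun g := Multiplicative.ofAdd (resOf (wOf ↑g))
  map_one' := by
    have h1 : wOf ((1 : ↥GammaS3) : SLC 3) = 0 := by
      simp [wOf]
    show Multiplicative.ofAdd (resOf (wOf ((1 : ↥GammaS3) : SLC 3))) = 1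
    rw [h1]
    have h2 : resOf (0 : ℂ) = ((0 : ℤ) : ZMod 3) := resOf_spec (by simpa using mulSet_zero sqrt3)
    rw [h2]
    simp
  map_mul' := by
    intro a b
    obtain ⟨ma, hma⟩ := exists_res (wOf_mem_Eis a.2)
    obtain ⟨mb, hmb⟩ := exists_res (wOf_mem_Eis b.2)
    obtain ⟨E, hE, hkey⟩ := mul00_congr a.2 b.2
    have hab : wOf ((a : SLC 3) * b) - ((ma + mb : ℤ) : ℂ) ∈ mulSet sqrt3 := by
      have heq : wOf ((a : SLC 3) * b) - ((ma + mb : ℤ) : ℂ) =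
          (wOf ↑a - ma) + (wOf ↑b - mb) + E / sqrt3 := by
        rw [wOf, hkey, add_div, add_div, ← wOf, ← wOf]
        push_cast
        ring
      rw [heq]
      exact mulSet_add (mulSet_add hma hmb) (mulSet3_div_sqrt3 hE)
    have h1 : resOf (wOf ((a : SLC 3) * b)) = ((ma + mb : ℤ) : ZMod 3) := resOf_spec hab
    have h2 : resOf (wOf (a : SLC 3)) = (ma : ZMod 3) := resOf_spec hma
    have h3 : resOf (wOf (b : SLC 3)) = (mb : ZMod 3) := resOf_spec hmb
    show Multiplicative.ofAdd (resOf (wOf ↑(a * b))) =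
      Multiplicative.ofAdd (resOf (wOf ↑a)) * Multiplicative.ofAdd (resOf (wOf ↑b))
    rw [show ((↑(a * b) : SLC 3)) = (a : SLC 3) * b from rfl, h1, h2, h3,
      ← ofAdd_add]
    push_cast
    rfl

lemma zISL_coe : (zISL : Matrix (Fin 3) (Fin 3) ℂ) = zeta3 • 1 := rfl

lemma zISL_mem_GammaS3 : zISL ∈ GammaS3 := by
  constructor
  · constructor
    · intro i j
      rw [zISL_coe, Matrix.smul_apply, Matrix.one_apply]
      split_ifs <;> simp [zeta3_mem_Eis, Eis.zero_mem]
    · rw [zISL_coe]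
      have hconj : (zeta3 • (1 : Matrix (Fin 3) (Fin 3) ℂ))ᴴ =
          (starRingEnd ℂ zeta3) • (1 : Matrix (Fin 3) (Fin 3) ℂ) := by
        rw [Matrix.conjTranspose_smul, Matrix.conjTranspose_one]
        rfl
      rw [hconj, Matrix.smul_mul, Matrix.mul_smul, Matrix.smul_mul, smul_smul,
        Matrix.one_mul, Matrix.mul_one]
      have hz1 : zeta3 * starRingEnd ℂ zeta3 = 1 := by
        rw [zeta3_conj, ← pow_succ', zeta3_pow_three]
      rw [hz1, one_smul]
  · intro i j
    rw [zISL_coe, Matrix.smul_apply]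
    by_cases hij : i = j
    · subst hij
      simp only [Matrix.one_apply_eq, smul_eq_mul, mul_one]
      exact zeta3_sub_one_mem
    · simp only [Matrix.one_apply_ne hij, smul_eq_mul, mul_zero, sub_zero]
      exact mulSet_zero sqrt3

lemma zISL_pow_three : zISL ^ 3 = 1 := by
  apply Subtype.ext
  show ((zISL ^ 3 : SLC 3) : Matrix (Fin 3) (Fin 3) ℂ) = 1
  rw [Matrix.SpecialLinearGroup.coe_pow, zISL_coe, smul_pow, one_pow, zeta3_pow_three,
    one_smul]

lemma zISL_sq_coe : ((zISL * zISL : SLC 3) : Matrix (Fin 3) (Fin 3) ℂ) =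
    (zeta3 * zeta3) • 1 := by
  rw [Matrix.SpecialLinearGroup.coe_mul, zISL_coe, Matrix.smul_mul, Matrix.mul_smul,
    Matrix.one_mul, smul_smul]

lemma zISL_central (g : SLC 3) : zISL * g = g * zISL := by
  apply Subtype.ext
  show ((zISL * g : SLC 3) : Matrix (Fin 3) (Fin 3) ℂ) = ((g * zISL : SLC 3) : _)
  rw [Matrix.SpecialLinearGroup.coe_mul, Matrix.SpecialLinearGroup.coe_mul, zISL_coe,
    Matrix.smul_mul, Matrix.mul_smul, Matrix.one_mul, Matrix.mul_one]

lemma wOf_zISL : wOf zISL = zeta3 + 1 := by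
  rw [wOf, zISL_coe, Matrix.smul_apply, Matrix.one_apply_eq, smul_eq_mul, mul_one,
    zeta3_sub_one_eq, mul_comm, mul_div_assoc, div_self sqrt3_ne_zero, mul_one]

lemma resOf_wOf_zISL : resOf (wOf zISL) = 2 := by
  rw [wOf_zISL]
  have : (zeta3 + 1) - ((2 : ℤ) : ℂ) ∈ mulSet sqrt3 := by
    push_cast
    have : zeta3 + 1 - 2 = zeta3 - 1 := by ring
    rw [this]
    exact zeta3_sub_one_mem
  rw [resOf_spec this]
  rfl

lemma phi3_zISL : phi3 ⟨zISL, zISL_mem_GammaS3⟩ = Multiplicative.ofAdd (2 : ZMod 3) := by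
  show Multiplicative.ofAdd (resOf (wOf zISL)) = Multiplicative.ofAdd (2 : ZMod 3)
  rw [resOf_wOf_zISL]

lemma phi3_surjective : Function.Surjective phi3 := by
  intro t
  have h3 : ∀ s : Multiplicative (ZMod 3),
      s = Multiplicative.ofAdd 0 ∨ s = Multiplicative.ofAdd 2 ∨
        s = Multiplicative.ofAdd 2 * Multiplicative.ofAdd 2 := by decide
  rcases h3 t with rfl | rfl | rfl
  · exact ⟨1, by rw [phi3.map_one]; rfl⟩
  · exact ⟨⟨zISL, zISL_mem_GammaS3⟩, phi3_zISL⟩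
  · exact ⟨⟨zISL, zISL_mem_GammaS3⟩ * ⟨zISL, zISL_mem_GammaS3⟩, by
      rw [phi3.map_mul, phi3_zISL]⟩

lemma ker_phi3 : phi3.ker = Upsilon.subgroupOf GammaS3 := by
  ext g
  rw [MonoidHom.mem_ker, Subgroup.mem_subgroupOf]
  constructor
  · intro h
    have : resOf (wOf ↑g) = 0 := by
      have := congrArg Multiplicative.toAdd h
      exact this
    exact (mem_Upsilon_iff g.2).mpr this
  · intro h
    have : resOf (wOf ↑g) = 0 := (mem_Upsilon_iff g.2).mp h
    show Multiplicative.ofAdd (resOf (wOf ↑g)) = 1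
    rw [this]
    rfl

lemma upsilon_relindex : Upsilon.relIndex GammaS3 = 3 := by
  show (Upsilon.subgroupOf GammaS3).index = 3
  rw [← ker_phi3, Subgroup.index_ker,
    MonoidHom.range_eq_top.mpr phi3_surjective, Subgroup.card_top,
    Nat.card_eq_fintype_card]
  rfl

lemma zISL_ne_one : zISL ≠ 1 := by
  intro h
  have := congrArg (fun g : SLC 3 => (g : Matrix (Fin 3) (Fin 3) ℂ) 0 0) h
  simp only [zISL_coe, Matrix.smul_apply, Matrix.one_apply_eq, smul_eq_mul, mul_one,
    Matrix.SpecialLinearGroup.coe_one] at this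
  exact zeta3_ne_one (by simpa using this)

lemma zISL_sq_ne_one : zISL * zISL ≠ 1 := by
  intro h
  have := congrArg (fun g : SLC 3 => (g : Matrix (Fin 3) (Fin 3) ℂ) 0 0) h
  simp only [zISL_sq_coe, Matrix.smul_apply, Matrix.one_apply_eq, smul_eq_mul, mul_one,
    Matrix.SpecialLinearGroup.coe_one] at this
  have hz : zeta3 * zeta3 = 1 := by simpa using this
  have : zeta3 = 1 := by
    have h3 := zeta3_pow_three
    calc zeta3 = zeta3 * zeta3 * zeta3 := by rw [hz, one_mul]
      _ = zeta3 ^ 3 := by ring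
      _ = 1 := h3
  exact zeta3_ne_one this

lemma zISL_zpow (k : ℤ) : zISL ^ k = zISL ^ (k % 3).toNat := by
  have hk : k = 3 * (k / 3) + k % 3 := (Int.mul_ediv_add_emod k 3).symm
  have hmod : (0:ℤ) ≤ k % 3 := Int.emod_nonneg k (by norm_num)
  calc zISL ^ k = zISL ^ (3 * (k / 3) + k % 3) := by rw [← hk]
    _ = (zISL ^ (3:ℤ)) ^ (k / 3) * zISL ^ (k % 3) := by
        rw [_root_.zpow_add, _root_.zpow_mul]
    _ = zISL ^ (k % 3) := by
        rw [show (zISL ^ (3:ℤ)) = 1 by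
          rw [show (3:ℤ) = ((3:ℕ):ℤ) by norm_num, _root_.zpow_natCast, zISL_pow_three]]
        simp
    _ = zISL ^ (k % 3).toNat := by
        rw [← _root_.zpow_natCast, Int.toNat_of_nonneg hmod]

lemma muThree_carrier : (muThree : Set (SLC 3)) = {1, zISL, zISL * zISL} := by
  ext x
  simp only [Set.mem_insert_iff, Set.mem_singleton_iff, SetLike.mem_coe]
  constructor
  · intro hx
    obtain ⟨k, rfl⟩ := Subgroup.mem_zpowers_iff.mp hx
    rw [zISL_zpow k]
    have h0 : (0:ℤ) ≤ k % 3 := Int.emod_nonneg k (by norm_num)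
    have h3 : k % 3 < 3 := Int.emod_lt_of_pos k (by norm_num)
    interval_cases h : (k % 3)
    · left; simp
    · right; left; simp
    · right; right; simp [pow_succ, pow_zero]
  · rintro (rfl | rfl | rfl)
    · exact Subgroup.one_mem _
    · exact Subgroup.mem_zpowers _
    · exact Subgroup.mul_mem _ (Subgroup.mem_zpowers _) (Subgroup.mem_zpowers _)

lemma upsilon_inf_mu : Upsilon ⊓ muThree = ⊥ := by
  rw [eq_bot_iff]
  rintro x ⟨hxU, hxM⟩
  have hx : x ∈ ({1, zISL, zISL * zISL} : Set (SLC 3)) := by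
    rw [← muThree_carrier]; exact hxM
  rcases hx with rfl | rfl | rfl
  · exact Subgroup.mem_bot.mpr rfl
  · exfalso
    have h := hxU.2
    rw [zISL_coe] at h
    simp only [Matrix.smul_apply, Matrix.one_apply_eq, smul_eq_mul, mul_one] at h
    exact zeta3_sub_one_not_mem3 h
  · exfalso
    have h := hxU.2
    rw [zISL_sq_coe] at h
    simp only [Matrix.smul_apply, Matrix.one_apply_eq, smul_eq_mul, mul_one] at h
    exact zeta3_sq_sub_one_not_mem3 h

lemma unique_decomp_aux {p q : ↥Upsilon × ↥muThree}
    (h : ((p.1 : SLC 3) * (p.2 : SLC 3)) = ((q.1 : SLC 3) * (q.2 : SLC 3))) : p = q := by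
  have hkey : ((q.1 : SLC 3))⁻¹ * p.1 = (q.2 : SLC 3) * (p.2 : SLC 3)⁻¹ := by
    have hp1 : (p.1 : SLC 3) = (q.1 : SLC 3) * ((q.2 : SLC 3) * (p.2 : SLC 3)⁻¹) := by
      rw [← mul_assoc, ← h, mul_assoc, mul_inv_cancel, mul_one]
    rw [hp1, ← mul_assoc, inv_mul_cancel, one_mul]
  have hmemU : ((q.1 : SLC 3))⁻¹ * p.1 ∈ Upsilon :=
    Upsilon.mul_mem (Upsilon.inv_mem q.1.2) p.1.2
  have hmemM : ((q.1 : SLC 3))⁻¹ * p.1 ∈ muThree := by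
    rw [hkey]
    exact muThree.mul_mem q.2.2 (muThree.inv_mem p.2.2)
  have hbot : ((q.1 : SLC 3))⁻¹ * p.1 ∈ Upsilon ⊓ muThree := ⟨hmemU, hmemM⟩
  rw [upsilon_inf_mu, Subgroup.mem_bot] at hbot
  have h1 : (q.1 : SLC 3) = p.1 := inv_mul_eq_one.mp hbot
  have h2 : (q.2 : SLC 3) = p.2 := by
    have h2' : (q.2 : SLC 3) * (p.2 : SLC 3)⁻¹ = 1 := by rw [← hkey]; exact hbot
    exact mul_inv_eq_one.mp h2'
  exact Prod.ext (Subtype.ext h1.symm) (Subtype.ext h2.symm)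

lemma decomp_exists {g : SLC 3} (hg : g ∈ GammaS3) :
    ∃ u ∈ Upsilon, ∃ c ∈ muThree, u * c = g := by
  obtain ⟨j, hj⟩ : ∃ j : ℕ, phi3 ⟨g, hg⟩ * (Multiplicative.ofAdd (2 : ZMod 3)) ^ j = 1 := by
    have h3 : ∀ s : Multiplicative (ZMod 3),
        s * (Multiplicative.ofAdd (2 : ZMod 3)) ^ 0 = 1 ∨
        s * (Multiplicative.ofAdd (2 : ZMod 3)) ^ 1 = 1 ∨
        s * (Multiplicative.ofAdd (2 : ZMod 3)) ^ 2 = 1 := by decide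
    rcases h3 (phi3 ⟨g, hg⟩) with h | h | h
    exacts [⟨0, h⟩, ⟨1, h⟩, ⟨2, h⟩]
  have hker : phi3 (⟨g, hg⟩ * ⟨zISL, zISL_mem_GammaS3⟩ ^ j) = 1 := by
    rw [phi3.map_mul, phi3.map_pow, phi3_zISL, hj]
  have humem : g * zISL ^ j ∈ Upsilon := by
    rw [← MonoidHom.mem_ker, ker_phi3, Subgroup.mem_subgroupOf] at hker
    exact hker
  refine ⟨g * zISL ^ j, humem, (zISL ^ j)⁻¹,
    muThree.inv_mem (Subgroup.pow_mem muThree (Subgroup.mem_zpowers _) j), ?_⟩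
  exact mul_inv_cancel_right g (zISL ^ j)

/-- `Γ(√-3)` is the internal direct product of `Υ` and the central
subgroup `μ₃ = {I₃, ζI₃, ζ²I₃}`: `μ₃ ⊆ Γ(√-3)` is central, `Υ` has index `3` in `Γ(√-3)`,
`Υ ∩ μ₃ = {I₃}`, and every element of `Γ(√-3)` is uniquely `u·c` with `u ∈ Υ`, `c ∈ μ₃`. -/
theorem statement9 :
    (muThree : Set (SLC 3)) = {1, zISL, zISL * zISL} ∧
    muThree ≤ GammaS3 ∧
    (∀ c ∈ muThree, ∀ g : SLC 3, c * g = g * c) ∧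
    Upsilon ≤ GammaS3 ∧
    Upsilon.relIndex GammaS3 = 3 ∧
    Upsilon ⊓ muThree = ⊥ ∧
    ∀ g ∈ GammaS3, ∃! p : ↥Upsilon × ↥muThree,
      ((p.1 : SLC 3) * (p.2 : SLC 3)) = g := by
  refine ⟨muThree_carrier, Subgroup.zpowers_le.mpr zISL_mem_GammaS3, ?_, fun g hg => hg.1,
    upsilon_relindex, upsilon_inf_mu, ?_⟩
  · intro c hc g
    obtain ⟨k, rfl⟩ := Subgroup.mem_zpowers_iff.mp hc
    exact Commute.zpow_left (zISL_central g) k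
  · intro g hg
    obtain ⟨u, hu, c, hc, huc⟩ := decomp_exists hg
    refine ⟨(⟨u, hu⟩, ⟨c, hc⟩), huc, ?_⟩
    intro q hq
    exact unique_decomp_aux (hq.trans huc.symm)
end
end
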